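/- arXiv:1001.3344 — 3 statements merged into one kernel-verified Lean document; each statement's English description precedes it below -/
import Mathlib

section
/- Sewing map (Theorem 2.1): Let V be a Banach space, ℓ₁ < ℓ₂ real numbers, and μ > 1. Let h be a continuous V-valued 2-increment on {(s,u,t) : ℓ₁ ≤ s ≤ u ≤ t ≤ ℓ₂} such that (δh)_{suvt} := h_{uvt} − h_{svt} + h_{sut} − h_{suv} = 0 for all ℓ₁ ≤ s ≤ u ≤ v ≤ t ≤ ℓ₂ and ‖h‖_μ < ∞. Then there exists a unique continuous map Λh : {(s,t) : ℓ₁ ≤ s ≤ t ≤ ℓ₂} → V vanishing on the diagonal with sup_{s<t} ‖(Λh)_{st}‖/(t−s)^μ < ∞ and (Λh)_{st} − (Λh)_{su} − (Λh)_{ut} = h_{sut} for all s ≤ u ≤ t. Moreover h ↦ Λh is linear and there is a constant c_μ depending only on μ such that sup_{s<t} ‖(Λh)_{st}‖/(t−s)^μ ≤ c_μ ‖h‖_μ. -/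
open Set
open scoped ENNReal

noncomputable section

variable {V : Type*} [NormedAddCommGroup V]

/-- A (continuous) 2-increment on the simplex over `[l1, l2]`: continuous on the simplex and
vanishing whenever two consecutive arguments coincide. -/
def IsTwoIncrement (l1 l2 : ℝ) (h : ℝ → ℝ → ℝ → V) : Prop :=
  ContinuousOn (fun p : ℝ × ℝ × ℝ => h p.1 p.2.1 p.2.2)
    {p : ℝ × ℝ × ℝ | l1 ≤ p.1 ∧ p.1 ≤ p.2.1 ∧ p.2.1 ≤ p.2.2 ∧ p.2.2 ≤ l2} ∧
  ∀ s u t : ℝ, l1 ≤ s → s ≤ u → u ≤ t → t ≤ l2 → (s = u ∨ u = t) → h s u t = 0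

/-- The `(ρ, σ')`-Hölder norm `‖h‖_{ρ,σ'} = sup ‖h_{sut}‖ / ((u-s)^ρ (t-u)^σ')` of a
2-increment, as an extended nonnegative real. -/
noncomputable def twoIncNorm (l1 l2 ρ σ' : ℝ) (h : ℝ → ℝ → ℝ → V) : ℝ≥0∞ :=
  ⨆ p : {p : ℝ × ℝ × ℝ // l1 ≤ p.1 ∧ p.1 ≤ p.2.1 ∧ p.2.1 ≤ p.2.2 ∧ p.2.2 ≤ l2},
    ENNReal.ofReal (‖h p.1.1 p.1.2.1 p.1.2.2‖ /
      ((p.1.2.1 - p.1.1) ^ ρ * (p.1.2.2 - p.1.2.1) ^ σ'))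

/-- The norm `‖h‖_μ`: infimum of `∑ᵢ ‖hᵢ‖_{ρᵢ, μ - ρᵢ}` over all countable decompositions
`h = ∑ᵢ hᵢ` into 2-increments and all choices `ρᵢ ∈ (0, μ)`. -/
noncomputable def muNorm (l1 l2 μ : ℝ) (h : ℝ → ℝ → ℝ → V) : ℝ≥0∞ :=
  ⨅ (hs : ℕ → ℝ → ℝ → ℝ → V) (ρ : ℕ → ℝ)
    (_ : ∀ i, IsTwoIncrement l1 l2 (hs i))
    (_ : ∀ i, 0 < ρ i ∧ ρ i < μ)
    (_ : ∀ s u t : ℝ, l1 ≤ s → s ≤ u → u ≤ t → t ≤ l2 →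
        HasSum (fun i => hs i s u t) (h s u t)),
    ∑' i, twoIncNorm l1 l2 (ρ i) (μ - ρ i) (hs i)

/-- The defining properties of the sewing map `Λh`: continuous on the simplex, vanishing on the
diagonal, with finite `μ`-Hölder sup, and with coboundary `δ(Λh) = h`. -/
def IsSewing (l1 l2 μ : ℝ) (h : ℝ → ℝ → ℝ → V) (Λ : ℝ → ℝ → V) : Prop :=
  ContinuousOn (fun p : ℝ × ℝ => Λ p.1 p.2)
    {p : ℝ × ℝ | l1 ≤ p.1 ∧ p.1 ≤ p.2 ∧ p.2 ≤ l2} ∧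
  (∀ t : ℝ, l1 ≤ t → t ≤ l2 → Λ t t = 0) ∧
  (⨆ p : {p : ℝ × ℝ // l1 ≤ p.1 ∧ p.1 < p.2 ∧ p.2 ≤ l2},
      ENNReal.ofReal (‖Λ p.1.1 p.1.2‖ / (p.1.2 - p.1.1) ^ μ)) < ⊤ ∧
  ∀ s u t : ℝ, l1 ≤ s → s ≤ u → u ≤ t → t ≤ l2 → Λ s t - Λ s u - Λ u t = h s u t


/- ===== Auxiliary infrastructure for the sewing lemma ===== -/
open Set
open scoped ENNReal

noncomputable section

/-- `i`-th point of the equispaced `N`-partition of `[s,t]`. -/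
def ppt (s t : ℝ) (N i : ℕ) : ℝ := s + i * (t - s) / N

lemma ppt_zero (s t : ℝ) (N : ℕ) : ppt s t N 0 = s := by simp [ppt]

lemma ppt_self (s t : ℝ) {N : ℕ} (hN : N ≠ 0) : ppt s t N N = t := by
  have : (N:ℝ) ≠ 0 := Nat.cast_ne_zero.2 hN
  unfold ppt
  field_simp
  ring

lemma ppt_mono {s t : ℝ} (hst : s ≤ t) (N : ℕ) {i j : ℕ} (hij : i ≤ j) :
    ppt s t N i ≤ ppt s t N j := by
  unfold ppt
  rw [mul_div_assoc, mul_div_assoc]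
  have h1 : (0:ℝ) ≤ (t - s) / N := div_nonneg (sub_nonneg.2 hst) (Nat.cast_nonneg N)
  have h2 : (i:ℝ) ≤ j := Nat.cast_le.2 hij
  nlinarith [mul_le_mul_of_nonneg_right h2 h1]

lemma le_ppt {s t : ℝ} (hst : s ≤ t) (N i : ℕ) : s ≤ ppt s t N i := by
  simpa [ppt_zero] using ppt_mono hst N (Nat.zero_le i)

lemma ppt_le {s t : ℝ} (hst : s ≤ t) {N i : ℕ} (hN : N ≠ 0) (hi : i ≤ N) :
    ppt s t N i ≤ t := by
  simpa [ppt_self s t hN] using ppt_mono hst N hi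

lemma ppt_succ_sub {s t : ℝ} {N : ℕ} (hN : N ≠ 0) (i : ℕ) :
    ppt s t N (i+1) - ppt s t N i = (t - s) / N := by
  have : (N:ℝ) ≠ 0 := Nat.cast_ne_zero.2 hN
  unfold ppt
  field_simp
  push_cast
  ring

/-- compatibility: the `M`-partition of the `i`-th interval of the `N`-partition. -/
lemma ppt_mul {s t : ℝ} {N M : ℕ} (hN : N ≠ 0) (hM : M ≠ 0) (i r : ℕ) :
    ppt (ppt s t N i) (ppt s t N (i+1)) M r = ppt s t (N*M) (i*M + r) := by
  have hN' : (N:ℝ) ≠ 0 := Nat.cast_ne_zero.2 hN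
  have hM' : (M:ℝ) ≠ 0 := Nat.cast_ne_zero.2 hM
  unfold ppt
  push_cast
  field_simp
  ring

end

noncomputable section
variable {V : Type} [NormedAddCommGroup V] [NormedSpace ℝ V]
set_option linter.unusedSectionVars false

/-- The dyadic-midpoint term at level `j`, position `k`, for the interval `[s,t]`. -/
def sewTerm (h : ℝ → ℝ → ℝ → V) (s t : ℝ) (p : ℕ × ℕ) : V :=
  if p.2 < 2 ^ p.1 then
    h (ppt s t (2 ^ p.1) p.2) (ppt s t (2 ^ (p.1+1)) (2*p.2+1)) (ppt s t (2 ^ p.1) (p.2+1))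
  else 0

lemma sewTerm_add (h₁ h₂ : ℝ → ℝ → ℝ → V) (s t : ℝ) :
    sewTerm (h₁ + h₂) s t = sewTerm h₁ s t + sewTerm h₂ s t := by
  funext p; simp only [sewTerm, Pi.add_apply]; split <;> simp

lemma sewTerm_smul (a : ℝ) (h : ℝ → ℝ → ℝ → V) (s t : ℝ) :
    sewTerm (a • h) s t = a • sewTerm h s t := by
  funext p; simp only [sewTerm, Pi.smul_apply]; split <;> simp

/-- Submodule of `h`'s whose dyadic series for `[s,t]` is summable. -/
def sewDom (V : Type) [NormedAddCommGroup V] [NormedSpace ℝ V] (s t : ℝ) :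
    Submodule ℝ (ℝ → ℝ → ℝ → V) where
  carrier := {h | Summable (sewTerm h s t)}
  add_mem' := by
    intro a b ha hb
    show Summable (sewTerm (a + b) s t); rw [sewTerm_add]; exact ha.add hb
  zero_mem' := by
    have : sewTerm (0 : ℝ → ℝ → ℝ → V) s t = 0 := by
      funext p; simp [sewTerm]
    show Summable (sewTerm 0 s t); rw [this]; exact summable_zero
  smul_mem' := by
    intro c h hh
    show Summable (sewTerm (c • h) s t); rw [sewTerm_smul]; exact hh.const_smul c

lemma sewDom_compl (s t : ℝ) : ∃ q, IsCompl (sewDom V s t) q :=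
  Submodule.exists_isCompl _

/-- A linear projection onto `sewDom V s t`, as a map into the ambient space. -/
def sewProj (V : Type) [NormedAddCommGroup V] [NormedSpace ℝ V] (s t : ℝ) :
    (ℝ → ℝ → ℝ → V) →ₗ[ℝ] (ℝ → ℝ → ℝ → V) :=
  (sewDom V s t).subtype ∘ₗ
    (sewDom V s t).projectionOnto (sewDom_compl s t).choose (sewDom_compl s t).choose_spec

lemma sewProj_mem (s t : ℝ) (h : ℝ → ℝ → ℝ → V) : sewProj V s t h ∈ sewDom V s t := by
  simp [sewProj]

lemma sewProj_eq_of_mem (s t : ℝ) {h : ℝ → ℝ → ℝ → V} (hh : h ∈ sewDom V s t) :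
    sewProj V s t h = h := by
  have := Submodule.linearProjOfIsCompl_apply_left (sewDom_compl (V := V) s t).choose_spec
    (⟨h, hh⟩ : sewDom V s t)
  simp [sewProj, this]

/-- The sewing map. -/
def Lmap (V : Type) [NormedAddCommGroup V] [NormedSpace ℝ V] (h : ℝ → ℝ → ℝ → V) (s t : ℝ) : V :=
  ∑' p : ℕ × ℕ, sewTerm (sewProj V s t h) s t p

lemma Lmap_add (h₁ h₂ : ℝ → ℝ → ℝ → V) : Lmap V (h₁ + h₂) = Lmap V h₁ + Lmap V h₂ := by
  funext s t
  have e : sewProj V s t (h₁ + h₂) = sewProj V s t h₁ + sewProj V s t h₂ := map_add _ _ _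
  have s1 : Summable (sewTerm (sewProj V s t h₁) s t) := sewProj_mem s t h₁
  have s2 : Summable (sewTerm (sewProj V s t h₂) s t) := sewProj_mem s t h₂
  simp only [Lmap, Pi.add_apply, e, sewTerm_add]
  exact Summable.tsum_add s1 s2

lemma Lmap_smul (a : ℝ) (h : ℝ → ℝ → ℝ → V) : Lmap V (a • h) = a • Lmap V h := by
  funext s t
  have e : sewProj V s t (a • h) = a • sewProj V s t h := map_smul _ _ _
  have s1 : Summable (sewTerm (sewProj V s t h) s t) := sewProj_mem s t h
  simp only [Lmap, Pi.smul_apply, e, sewTerm_smul]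
  exact Summable.tsum_const_smul a s1

lemma Lmap_eq_tsum {s t : ℝ} {h : ℝ → ℝ → ℝ → V} (hh : Summable (sewTerm h s t)) :
    Lmap V h s t = ∑' p : ℕ × ℕ, sewTerm h s t p := by
  rw [Lmap, sewProj_eq_of_mem s t hh]

end
open Set
open scoped ENNReal

noncomputable section

lemma two_rpow_helper (j : ℕ) (μ D K : ℝ) (hD : 0 ≤ D) :
    (2:ℝ)^j * (K * (D / 2 ^ (j+1)) ^ μ) =
      (K * D^μ * (2:ℝ)^(-μ)) * ((2:ℝ)^((1:ℝ)-μ))^j := by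
  have h2 : (0:ℝ) < 2 := by norm_num
  rw [show ((2:ℝ)^(j+1)) = (2:ℝ)^(((j+1 : ℕ)) : ℝ) from (Real.rpow_natCast 2 (j+1)).symm]
  rw [Real.div_rpow hD (Real.rpow_nonneg h2.le _)]
  rw [← Real.rpow_natCast ((2:ℝ)^((1:ℝ)-μ)) j, ← Real.rpow_mul h2.le]
  rw [show ((2:ℝ)^j) = (2:ℝ)^((j : ℕ) : ℝ) from (Real.rpow_natCast 2 j).symm]
  rw [← Real.rpow_mul h2.le]
  rw [div_eq_mul_inv, ← Real.rpow_neg h2.le]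
  rw [show (K * D ^ μ * (2:ℝ) ^ (-μ)) * (2:ℝ) ^ (((1:ℝ)-μ) * (j:ℝ))
      = K * D ^ μ * ((2:ℝ) ^ (-μ) * (2:ℝ) ^ (((1:ℝ)-μ) * (j:ℝ))) by ring,
    show (2:ℝ) ^ ((j:ℕ):ℝ) * (K * (D ^ μ * (2:ℝ) ^ (-((((j+1):ℕ):ℝ) * μ))))
      = K * D ^ μ * ((2:ℝ) ^ ((j:ℕ):ℝ) * (2:ℝ) ^ (-((((j+1):ℕ):ℝ) * μ))) by ring]
  rw [← Real.rpow_add h2, ← Real.rpow_add h2]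
  rw [show ((j:ℝ) + (-((((j+1 : ℕ)):ℝ) * μ))) = (-μ + ((1:ℝ)-μ) * (j:ℝ)) by push_cast; ring]

end

noncomputable section

/-- Dominating function for the dyadic series. -/
def gBnd (μ K D : ℝ) (p : ℕ × ℕ) : ℝ :=
  if p.2 < 2 ^ p.1 then K * (D / 2 ^ (p.1+1)) ^ μ else 0

lemma gBnd_nonneg {μ K D : ℝ} (hK : 0 ≤ K) (hD : 0 ≤ D) : 0 ≤ gBnd μ K D := by
  intro p
  unfold gBnd
  split
  · have h0 : (0:ℝ) ≤ D / 2 ^ (p.1+1) := by positivity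
    exact mul_nonneg hK (Real.rpow_nonneg h0 μ)
  · exact le_refl 0

lemma gBnd_row_summable (μ K D : ℝ) (j : ℕ) : Summable (fun k => gBnd μ K D (j, k)) :=
  summable_of_ne_finset_zero (s := Finset.range (2^j))
    (fun k hk => if_neg (by simpa using hk))

lemma gBnd_row_eq (μ K D : ℝ) (j : ℕ) :
    (∑' k : ℕ, gBnd μ K D (j, k)) = (2:ℝ)^j * (K * (D / 2 ^ (j+1)) ^ μ) := by
  simp only [gBnd]
  rw [tsum_eq_sum (s := Finset.range (2^j)) (fun k hk => if_neg (by simpa using hk))]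
  rw [Finset.sum_congr rfl (fun k hk => if_pos (Finset.mem_range.1 hk)),
    Finset.sum_const, Finset.card_range, nsmul_eq_mul]
  push_cast
  ring

lemma geom_fact {μ : ℝ} (hμ : 1 < μ) :
    0 ≤ (2:ℝ)^((1:ℝ)-μ) ∧ (2:ℝ)^((1:ℝ)-μ) < 1 := by
  constructor
  · exact (Real.rpow_pos_of_pos two_pos _).le
  · exact Real.rpow_lt_one_of_one_lt_of_neg one_lt_two (by linarith)

lemma gBnd_summable {μ K D : ℝ} (hμ : 1 < μ) (hK : 0 ≤ K) (hD : 0 ≤ D) :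
    Summable (gBnd μ K D) := by
  obtain ⟨hr0, hr1⟩ := geom_fact hμ
  rw [summable_prod_of_nonneg (gBnd_nonneg hK hD)]
  refine ⟨gBnd_row_summable μ K D, ?_⟩
  have : (fun j => ∑' k, gBnd μ K D (j, k))
      = fun j => (K * D^μ * (2:ℝ)^(-μ)) * ((2:ℝ)^((1:ℝ)-μ))^j := by
    funext j; rw [gBnd_row_eq, two_rpow_helper j μ D K hD]
  rw [this]
  exact (summable_geometric_of_lt_one hr0 hr1).mul_left _

lemma gBnd_tsum_le {μ K D : ℝ} (hμ : 1 < μ) (hK : 0 ≤ K) (hD : 0 ≤ D) :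
    ∑' p : ℕ × ℕ, gBnd μ K D p ≤ (1 - (2:ℝ)^((1:ℝ)-μ))⁻¹ * (K * D^μ) := by
  obtain ⟨hr0, hr1⟩ := geom_fact hμ
  rw [Summable.tsum_prod' (gBnd_summable hμ hK hD) (gBnd_row_summable μ K D)]
  have e : (fun j => ∑' k, gBnd μ K D (j, k))
      = fun j => (K * D^μ * (2:ℝ)^(-μ)) * ((2:ℝ)^((1:ℝ)-μ))^j := by
    funext j; rw [gBnd_row_eq, two_rpow_helper j μ D K hD]
  calc ∑' j, ∑' k, gBnd μ K D (j, k)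
      = (K * D^μ * (2:ℝ)^(-μ)) * (1 - (2:ℝ)^((1:ℝ)-μ))⁻¹ := by
        rw [e, tsum_mul_left, tsum_geometric_of_lt_one hr0 hr1]
    _ ≤ (1 - (2:ℝ)^((1:ℝ)-μ))⁻¹ * (K * D^μ) := by
        have h1 : (2:ℝ)^(-μ) ≤ 1 :=
          Real.rpow_le_one_of_one_le_of_nonpos one_le_two (by linarith)
        have h2 : (0:ℝ) ≤ K * D^μ := mul_nonneg hK (Real.rpow_nonneg hD μ)
        have h3 : (0:ℝ) ≤ (1 - (2:ℝ)^((1:ℝ)-μ))⁻¹ := by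
          have : (0:ℝ) < 1 - (2:ℝ)^((1:ℝ)-μ) := by linarith
          positivity
        nlinarith [mul_nonneg h2 h3]

end

noncomputable section
set_option linter.unusedSectionVars false
variable {V : Type} [NormedAddCommGroup V] [NormedSpace ℝ V] [CompleteSpace V]
variable {l1 l2 μ K : ℝ} {h : ℝ → ℝ → ℝ → V}

lemma ppt_mul_left {s t : ℝ} {N M : ℕ} (hN : N ≠ 0) (hM : M ≠ 0) (i : ℕ) :
    ppt s t (N*M) (i*M) = ppt s t N i := by
  have hN' : (N:ℝ) ≠ 0 := Nat.cast_ne_zero.2 hN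
  have hM' : (M:ℝ) ≠ 0 := Nat.cast_ne_zero.2 hM
  unfold ppt
  push_cast
  field_simp

/-- Abbreviation for the dyadic series sum. -/
def lamSum (h : ℝ → ℝ → ℝ → V) (s t : ℝ) : V := ∑' p : ℕ × ℕ, sewTerm h s t p

section Core

variable (hb : ∀ s u t : ℝ, l1 ≤ s → s ≤ u → u ≤ t → t ≤ l2 →
    ∀ d : ℝ, 0 ≤ d → u - s ≤ d → t - u ≤ d → ‖h s u t‖ ≤ K * d ^ μ)

include hb

lemma sewTerm_le {s t : ℝ} (h1 : l1 ≤ s) (hst : s ≤ t) (h2 : t ≤ l2) (p : ℕ × ℕ) :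
    ‖sewTerm h s t p‖ ≤ gBnd μ K (t-s) p := by
  obtain ⟨j, k⟩ := p
  by_cases hk : k < 2 ^ j
  · have hNj : (2^j : ℕ) ≠ 0 := (Nat.two_pow_pos j).ne'
    have hN : (2^(j+1) : ℕ) ≠ 0 := (Nat.two_pow_pos (j+1)).ne'
    have castN : ((2^(j+1) : ℕ) : ℝ) = (2:ℝ)^(j+1) := by push_cast; ring
    have ea : ppt s t (2^j) k = ppt s t (2^(j+1)) (2*k) := by
      rw [show (2^(j+1) : ℕ) = 2^j * 2 by ring, show 2*k = k*2 by ring,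
        ppt_mul_left hNj two_ne_zero]
    have eb : ppt s t (2^j) (k+1) = ppt s t (2^(j+1)) (2*k+1+1) := by
      rw [show (2^(j+1) : ℕ) = 2^j * 2 by ring, show 2*k+1+1 = (k+1)*2 by ring,
        ppt_mul_left hNj two_ne_zero]
    set d : ℝ := (t - s) / 2^(j+1) with hd
    have hd0 : 0 ≤ d := by
      have := sub_nonneg.2 hst
      positivity
    have d1 : ppt s t (2^(j+1)) (2*k+1) - ppt s t (2^j) k = d := by
      rw [ea, ppt_succ_sub hN, castN]
    have d2 : ppt s t (2^j) (k+1) - ppt s t (2^(j+1)) (2*k+1) = d := by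
      rw [eb, ppt_succ_sub hN, castN]
    have o1 : ppt s t (2^j) k ≤ ppt s t (2^(j+1)) (2*k+1) := by
      rw [ea]; exact ppt_mono hst _ (by omega)
    have o2 : ppt s t (2^(j+1)) (2*k+1) ≤ ppt s t (2^j) (k+1) := by
      rw [eb]; exact ppt_mono hst _ (by omega)
    have r1 : l1 ≤ ppt s t (2^j) k := le_trans h1 (le_ppt hst _ _)
    have r2 : ppt s t (2^j) (k+1) ≤ l2 :=
      le_trans (ppt_le hst hNj (Nat.succ_le_of_lt hk)) h2
    have := hb _ _ _ r1 o1 o2 r2 d hd0 (le_of_eq d1) (le_of_eq d2)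
    simp only [sewTerm, gBnd, if_pos hk]
    exact this
  · simp only [sewTerm, gBnd, if_neg hk, norm_zero, le_refl]

lemma sewTerm_summable (hμ : 1 < μ) (hK : 0 ≤ K) {s t : ℝ}
    (h1 : l1 ≤ s) (hst : s ≤ t) (h2 : t ≤ l2) : Summable (sewTerm h s t) :=
  Summable.of_norm_bounded (gBnd_summable hμ hK (sub_nonneg.2 hst))
    (sewTerm_le hb h1 hst h2)

lemma lamSum_le (hμ : 1 < μ) (hK : 0 ≤ K) {s t : ℝ}
    (h1 : l1 ≤ s) (hst : s ≤ t) (h2 : t ≤ l2) :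
    ‖lamSum h s t‖ ≤ (1 - (2:ℝ)^((1:ℝ)-μ))⁻¹ * (K * (t-s)^μ) := by
  refine le_trans (norm_tsum_le_tsum_norm ?_) ?_
  · exact (gBnd_summable hμ hK (sub_nonneg.2 hst)).of_nonneg_of_le (fun p => norm_nonneg _)
      (sewTerm_le hb h1 hst h2)
  · exact le_trans (Summable.tsum_le_tsum (sewTerm_le hb h1 hst h2)
      ((gBnd_summable hμ hK (sub_nonneg.2 hst)).of_nonneg_of_le (fun p => norm_nonneg _)
        (sewTerm_le hb h1 hst h2))
      (gBnd_summable hμ hK (sub_nonneg.2 hst)))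
      (gBnd_tsum_le hμ hK (sub_nonneg.2 hst))

end Core

/-- Row sum at dyadic level `j`. -/
def rowSum (h : ℝ → ℝ → ℝ → V) (s t : ℝ) (j : ℕ) : V :=
  ∑ k ∈ Finset.range (2^j), sewTerm h s t (j, k)

lemma tsum_row (h : ℝ → ℝ → ℝ → V) (s t : ℝ) (j : ℕ) :
    ∑' k : ℕ, sewTerm h s t (j, k) = rowSum h s t j :=
  tsum_eq_sum (fun k hk => if_neg (by simpa using hk))

lemma rowSum_summable {s t : ℝ} (hsum : Summable (sewTerm h s t)) :
    Summable (rowSum h s t) := by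
  have H := hsum.hasSum.prod_fiberwise (fun j => (hsum.prod_factor j).hasSum)
  have e : (fun j => ∑' k : ℕ, sewTerm h s t (j, k)) = rowSum h s t :=
    funext (tsum_row h s t)
  exact ⟨_, e ▸ H⟩

lemma lamSum_eq_rows {s t : ℝ} (hsum : Summable (sewTerm h s t)) :
    lamSum h s t = ∑' j, rowSum h s t j := by
  rw [lamSum, Summable.tsum_prod' hsum (fun j => hsum.prod_factor j)]
  exact tsum_congr (fun j => tsum_row h s t j)

/-- Riemann-type sum of a two-parameter map over the equispaced `N`-partition. -/
def ESum (B : ℝ → ℝ → V) (N : ℕ) (a b : ℝ) : V :=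
  ∑ i ∈ Finset.range N, B (ppt a b N i) (ppt a b N (i+1))

lemma ESum_one (B : ℝ → ℝ → V) (a b : ℝ) : ESum B 1 a b = B a b := by
  simp [ESum, ppt_zero, ppt_self a b one_ne_zero]

lemma sum_range_two_mul {W : Type*} [AddCommMonoid W] (N : ℕ) (f : ℕ → W) :
    ∑ j ∈ Finset.range (2*N), f j = ∑ i ∈ Finset.range N, (f (2*i) + f (2*i+1)) := by
  induction N with
  | zero => simp
  | succ n ih =>
      rw [show 2*(n+1) = (2*n) + 1 + 1 by ring, Finset.sum_range_succ, Finset.sum_range_succ,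
        ih, Finset.sum_range_succ, add_assoc]

lemma ppt_section {a b : ℝ} {N k : ℕ} (hN : N ≠ 0) (hk : k ≠ 0) (i : ℕ) :
    ppt a (ppt a b N k) k i = ppt a b N i := by
  have hN' : (N:ℝ) ≠ 0 := Nat.cast_ne_zero.2 hN
  have hk' : (k:ℝ) ≠ 0 := Nat.cast_ne_zero.2 hk
  unfold ppt
  field_simp
  ring

lemma ppt_section' {a b : ℝ} {N k : ℕ} (hN : N ≠ 0) (hkN : k ≤ N) (hk' : N - k ≠ 0) (i : ℕ) :
    ppt (ppt a b N k) b (N-k) i = ppt a b N (k+i) := by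
  have hN' : (N:ℝ) ≠ 0 := Nat.cast_ne_zero.2 hN
  have hc : ((N-k : ℕ):ℝ) = (N:ℝ) - (k:ℝ) := by
    push_cast [Nat.cast_sub hkN]; ring
  have hk2 : (N:ℝ) - (k:ℝ) ≠ 0 := by
    rw [← hc]; exact Nat.cast_ne_zero.2 hk'
  unfold ppt
  rw [hc]
  push_cast
  field_simp
  ring

lemma nat_rpow_helper {N : ℕ} (hN : N ≠ 0) (μ D C : ℝ) (hD : 0 ≤ D) :
    (N:ℝ) * (C * (D/(N:ℝ))^μ) = C * D^μ * (N:ℝ)^((1:ℝ)-μ) := by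
  have hN' : (0:ℝ) < N := Nat.cast_pos.2 (Nat.pos_of_ne_zero hN)
  rw [Real.div_rpow hD hN'.le, Real.rpow_sub hN', Real.rpow_one]
  have hμ0 : ((N:ℝ))^μ ≠ 0 := (Real.rpow_pos_of_pos hN' μ).ne'
  field_simp

lemma two_pow_rpow (m : ℕ) (x : ℝ) :
    ((2:ℝ)^m)^x = ((2:ℝ)^x)^m := by
  rw [← Real.rpow_natCast (2:ℝ) m, ← Real.rpow_natCast ((2:ℝ)^x) m,
    ← Real.rpow_mul (by norm_num), ← Real.rpow_mul (by norm_num), mul_comm]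

lemma sum_range_mul {W : Type*} [AddCommMonoid W] (N M : ℕ) (f : ℕ → W) :
    ∑ j ∈ Finset.range (N*M), f j = ∑ i ∈ Finset.range N, ∑ r ∈ Finset.range M, f (i*M+r) := by
  induction N with
  | zero => simp
  | succ n ih =>
      rw [show (n+1)*M = n*M + M by ring, Finset.sum_range_add, ih, Finset.sum_range_succ]


lemma ESum_mul {B : ℝ → ℝ → V} {N M : ℕ} (hN : N ≠ 0) (hM : M ≠ 0) (a b : ℝ) :
    ESum B (N*M) a b
      = ∑ i ∈ Finset.range N, ESum B M (ppt a b N i) (ppt a b N (i+1)) := by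
  unfold ESum
  rw [sum_range_mul]
  refine Finset.sum_congr rfl (fun i _ => Finset.sum_congr rfl (fun r _ => ?_))
  rw [ppt_mul hN hM i r, ppt_mul hN hM i (r+1), show i*M+(r+1) = i*M+r+1 from by omega]

section Core2

variable (hb : ∀ s u t : ℝ, l1 ≤ s → s ≤ u → u ≤ t → t ≤ l2 →
    ∀ d : ℝ, 0 ≤ d → u - s ≤ d → t - u ≤ d → ‖h s u t‖ ≤ K * d ^ μ)
variable {B : ℝ → ℝ → V}
variable (hB : ∀ a u b : ℝ, l1 ≤ a → a ≤ u → u ≤ b → b ≤ l2 →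
    B a b - B a u - B u b = h a u b)

include hb hB

lemma ESum_sub_le (hμ : 1 < μ) (hK : 0 ≤ K) :
    ∀ N : ℕ, N ≠ 0 → ∀ a b : ℝ, l1 ≤ a → a ≤ b → b ≤ l2 →
      ‖ESum B N a b - B a b‖ ≤ N * (K * (b-a)^μ) := by
  intro N
  induction N with
  | zero => exact fun h0 => absurd rfl h0
  | succ n ih =>
    intro _ a b r1 hab r2
    have hrp : (0:ℝ) ≤ (b-a)^μ := Real.rpow_nonneg (sub_nonneg.2 hab) μ
    by_cases hn : n = 0
    · subst hn
      rw [ESum_one, sub_self, norm_zero]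
      positivity
    · have hn1 : (n+1 : ℕ) ≠ 0 := Nat.succ_ne_zero n
      set p := ppt a b (n+1) 1 with hp
      have hap : a ≤ p := le_ppt hab _ _
      have hpb : p ≤ b := ppt_le hab hn1 (by omega)
      have key : ESum B (n+1) a b = B a p + ESum B n p b := by
        have rhs : ESum B n p b
            = ∑ i ∈ Finset.range n, B (ppt a b (n+1) (i+1)) (ppt a b (n+1) (i+1+1)) := by
          unfold ESum
          refine Finset.sum_congr rfl (fun i _ => ?_)
          have e1 : ppt p b n i = ppt a b (n+1) (1+i) := by
            rw [hp, show n = (n+1) - 1 from rfl]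
            exact ppt_section' hn1 (by omega) (by omega) i
          have e2 : ppt p b n (i+1) = ppt a b (n+1) (1+(i+1)) := by
            rw [hp, show n = (n+1) - 1 from rfl]
            exact ppt_section' hn1 (by omega) (by omega) (i+1)
          rw [e1, e2, show 1+i = i+1 by omega, show 1+(i+1) = i+1+1 by omega]
        rw [show ESum B (n+1) a b
            = ∑ i ∈ Finset.range (n+1), B (ppt a b (n+1) i) (ppt a b (n+1) (i+1)) from rfl]
        rw [Finset.sum_range_succ', rhs, ppt_zero, ← hp]
        exact add_comm _ _
      have hBapb := hB a p b r1 hap hpb r2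
      have e3 : ESum B (n+1) a b - B a b = (ESum B n p b - B p b) - h a p b := by
        rw [key, ← hBapb]; abel
      have ihn := ih hn p b (le_trans r1 hap) hpb r2
      have hhb := hb a p b r1 hap hpb r2 (b-a) (sub_nonneg.2 hab)
        (by linarith) (by linarith)
      have mono : (b-p)^μ ≤ (b-a)^μ :=
        Real.rpow_le_rpow (sub_nonneg.2 hpb) (by linarith) (by linarith)
      calc ‖ESum B (n+1) a b - B a b‖
          ≤ ‖ESum B n p b - B p b‖ + ‖h a p b‖ := by rw [e3]; exact norm_sub_le _ _
        _ ≤ n * (K * (b-p)^μ) + K * (b-a)^μ := add_le_add ihn hhb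
        _ ≤ (n+1 : ℕ) * (K * (b-a)^μ) := by
            have : (K * (b-p)^μ) ≤ K * (b-a)^μ := mul_le_mul_of_nonneg_left mono hK
            have hn0 : (0:ℝ) ≤ n := Nat.cast_nonneg n
            push_cast
            nlinarith
  
lemma ESum_dyadic (m : ℕ) (a b : ℝ) (r1 : l1 ≤ a) (hab : a ≤ b) (r2 : b ≤ l2) :
    ESum B (2^m) a b = B a b - ∑ j ∈ Finset.range m, rowSum h a b j := by
  induction m with
  | zero => rw [pow_zero, ESum_one]; simp
  | succ m ih =>
    have hNm : (2^m : ℕ) ≠ 0 := (Nat.two_pow_pos m).ne'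
    have hNm1 : (2^(m+1) : ℕ) ≠ 0 := (Nat.two_pow_pos (m+1)).ne'
    have pair : ESum B (2^(m+1)) a b = ESum B (2^m) a b - rowSum h a b m := by
      rw [show (2^(m+1) : ℕ) = 2*(2^m) by ring]
      unfold ESum rowSum
      rw [sum_range_two_mul, ← Finset.sum_sub_distrib]
      refine Finset.sum_congr rfl (fun i hi => ?_)
      have hi' : i < 2^m := Finset.mem_range.1 hi
      have ea : ppt a b (2*2^m) (2*i) = ppt a b (2^m) i := by
        rw [show 2*(2^m) = (2^m)*2 by ring, show 2*i = i*2 by ring]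
        exact ppt_mul_left hNm two_ne_zero i
      have eb : ppt a b (2*2^m) (2*i+1+1) = ppt a b (2^m) (i+1) := by
        rw [show 2*(2^m) = (2^m)*2 by ring, show 2*i+1+1 = (i+1)*2 by omega]
        exact ppt_mul_left hNm two_ne_zero (i+1)
      have em : ppt a b (2*2^m) (2*i+1) = ppt a b (2^(m+1)) (2*i+1) := by
        rw [show 2*(2^m) = 2^(m+1) by ring]
      set x := ppt a b (2^m) i
      set y := ppt a b (2^(m+1)) (2*i+1)
      set z := ppt a b (2^m) (i+1)
      have hxy : x ≤ y := by
        have : x = ppt a b (2^(m+1)) (2*i) := by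
          rw [show (2^(m+1):ℕ) = (2^m)*2 by ring, show 2*i = i*2 by ring,
            ppt_mul_left hNm two_ne_zero i]
        rw [this]
        exact ppt_mono hab _ (by omega)
      have hyz : y ≤ z := by
        have : z = ppt a b (2^(m+1)) (2*i+1+1) := by
          rw [show (2^(m+1):ℕ) = (2^m)*2 by ring, show 2*i+1+1 = (i+1)*2 by omega,
            ppt_mul_left hNm two_ne_zero (i+1)]
        rw [this]
        exact ppt_mono hab _ (by omega)
      have hx1 : l1 ≤ x := le_trans r1 (le_ppt hab _ _)
      have hz2 : z ≤ l2 := le_trans (ppt_le hab hNm (by omega)) r2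
      have hBxyz := hB x y z hx1 hxy hyz hz2
      have est : sewTerm h a b (m, i) = h x y z := by
        simp only [sewTerm, if_pos hi']
        rfl
      rw [ea, em, eb, est, ← hBxyz]
      abel
    rw [pair, ih, Finset.sum_range_succ]
    abel


lemma ESum_dyadic_tendsto (hμ : 1 < μ) (hK : 0 ≤ K)
    {a b : ℝ} (r1 : l1 ≤ a) (hab : a ≤ b) (r2 : b ≤ l2) :
    Filter.Tendsto (fun m => ESum B (2^m) a b) Filter.atTop
      (nhds (B a b - lamSum h a b)) := by
  have hsum : Summable (sewTerm h a b) := sewTerm_summable hb hμ hK r1 hab r2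
  have e : (fun m => ESum B (2^m) a b)
      = fun m => B a b - ∑ j ∈ Finset.range m, rowSum h a b j := by
    funext m; exact ESum_dyadic hb hB m a b r1 hab r2
  rw [e, lamSum_eq_rows hsum]
  exact Filter.Tendsto.const_sub _ ((rowSum_summable hsum).hasSum.tendsto_sum_nat)

lemma Ival_split (hμ : 1 < μ) (hK : 0 ≤ K) {N : ℕ} (hN : N ≠ 0)
    {a b : ℝ} (r1 : l1 ≤ a) (hab : a ≤ b) (r2 : b ≤ l2) :
    B a b - lamSum h a b
      = ∑ i ∈ Finset.range N,
          (B (ppt a b N i) (ppt a b N (i+1)) - lamSum h (ppt a b N i) (ppt a b N (i+1))) := by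
  -- simplex facts for subintervals
  have hsub : ∀ i : ℕ, i < N → l1 ≤ ppt a b N i ∧ ppt a b N i ≤ ppt a b N (i+1)
      ∧ ppt a b N (i+1) ≤ l2 := by
    intro i hi
    exact ⟨le_trans r1 (le_ppt hab _ _), ppt_mono hab _ (by omega),
      le_trans (ppt_le hab hN (by omega)) r2⟩
  -- limit along N * 2^m, version 1
  have T1 : Filter.Tendsto (fun m => ESum B (N*2^m) a b) Filter.atTop
      (nhds (∑ i ∈ Finset.range N,
        (B (ppt a b N i) (ppt a b N (i+1)) - lamSum h (ppt a b N i) (ppt a b N (i+1))))) := by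
    have e : (fun m => ESum B (N*2^m) a b)
        = fun m => ∑ i ∈ Finset.range N, ESum B (2^m) (ppt a b N i) (ppt a b N (i+1)) := by
      funext m; exact ESum_mul hN (Nat.two_pow_pos m).ne' a b
    rw [e]
    exact tendsto_finset_sum _ (fun i hi =>
      ESum_dyadic_tendsto hb hB hμ hK (hsub i (Finset.mem_range.1 hi)).1
        (hsub i (Finset.mem_range.1 hi)).2.1 (hsub i (Finset.mem_range.1 hi)).2.2)
  -- limit along N * 2^m, version 2
  have T2 : Filter.Tendsto (fun m => ESum B (N*2^m) a b) Filter.atTop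
      (nhds (B a b - lamSum h a b)) := by
    have keydiff : ∀ m : ℕ, ‖ESum B (N*2^m) a b - ESum B (2^m) a b‖
        ≤ (N:ℝ) * K * (b-a)^μ * ((2:ℝ)^((1:ℝ)-μ))^m := by
      intro m
      have hm : (2^m : ℕ) ≠ 0 := (Nat.two_pow_pos m).ne'
      have e1 : ESum B (N*2^m) a b
          = ∑ k ∈ Finset.range (2^m), ESum B N (ppt a b (2^m) k) (ppt a b (2^m) (k+1)) := by
        rw [show N*2^m = 2^m*N by ring]
        exact ESum_mul hm hN a b
      have e2 : ESum B (N*2^m) a b - ESum B (2^m) a b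
          = ∑ k ∈ Finset.range (2^m),
              (ESum B N (ppt a b (2^m) k) (ppt a b (2^m) (k+1))
                - B (ppt a b (2^m) k) (ppt a b (2^m) (k+1))) := by
        rw [e1, show ESum B (2^m) a b
          = ∑ k ∈ Finset.range (2^m), B (ppt a b (2^m) k) (ppt a b (2^m) (k+1)) from rfl,
          ← Finset.sum_sub_distrib]
      have hsubm : ∀ k : ℕ, k < 2^m → l1 ≤ ppt a b (2^m) k ∧ ppt a b (2^m) k ≤ ppt a b (2^m) (k+1)
          ∧ ppt a b (2^m) (k+1) ≤ l2 := by
        intro k hk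
        exact ⟨le_trans r1 (le_ppt hab _ _), ppt_mono hab _ (by omega),
          le_trans (ppt_le hab hm (by omega)) r2⟩
      have bnd : ∀ k ∈ Finset.range (2^m),
          ‖ESum B N (ppt a b (2^m) k) (ppt a b (2^m) (k+1))
            - B (ppt a b (2^m) k) (ppt a b (2^m) (k+1))‖
          ≤ (N:ℝ) * (K * ((b-a)/((2^m : ℕ):ℝ))^μ) := by
        intro k hk
        have hk' := hsubm k (Finset.mem_range.1 hk)
        have := ESum_sub_le hb hB hμ hK N hN _ _ hk'.1 hk'.2.1 hk'.2.2
        rwa [ppt_succ_sub hm k] at this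
      calc ‖ESum B (N*2^m) a b - ESum B (2^m) a b‖
          ≤ ∑ k ∈ Finset.range (2^m), ‖ESum B N (ppt a b (2^m) k) (ppt a b (2^m) (k+1))
              - B (ppt a b (2^m) k) (ppt a b (2^m) (k+1))‖ := by
            rw [e2]; exact norm_sum_le _ _
        _ ≤ ∑ k ∈ Finset.range (2^m), (N:ℝ) * (K * ((b-a)/((2^m : ℕ):ℝ))^μ) :=
            Finset.sum_le_sum bnd
        _ = ((2^m : ℕ):ℝ) * ((N:ℝ) * (K * ((b-a)/((2^m : ℕ):ℝ))^μ)) := by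
            rw [Finset.sum_const, Finset.card_range, nsmul_eq_mul]
        _ = (N:ℝ) * K * (b-a)^μ * ((2:ℝ)^((1:ℝ)-μ))^m := by
            rw [show (N:ℝ) * (K * ((b-a)/((2^m : ℕ):ℝ))^μ)
                = ((N:ℝ)*K) * ((b-a)/((2^m : ℕ):ℝ))^μ by ring]
            rw [nat_rpow_helper hm μ (b-a) ((N:ℝ)*K) (sub_nonneg.2 hab)]
            rw [show (((2:ℕ)^m : ℕ):ℝ) = ((2:ℝ))^m by push_cast; ring]
            rw [two_pow_rpow m ((1:ℝ)-μ)]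
    have hdiff : Filter.Tendsto (fun m => ESum B (N*2^m) a b - ESum B (2^m) a b)
        Filter.atTop (nhds 0) := by
      apply squeeze_zero_norm keydiff
      rw [show (0:ℝ) = (N:ℝ) * K * (b-a)^μ * 0 by ring]
      exact (tendsto_pow_atTop_nhds_zero_of_lt_one (geom_fact hμ).1 (geom_fact hμ).2).const_mul _
    have := hdiff.add (ESum_dyadic_tendsto hb hB hμ hK r1 hab r2)
    simpa using this
  exact tendsto_nhds_unique T2 T1


variable (hdeg : ∀ s u t : ℝ, l1 ≤ s → s ≤ u → u ≤ t → t ≤ l2 →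
    (s = u ∨ u = t) → h s u t = 0)

include hdeg

omit hB in
lemma lamSum_diag {t : ℝ} (r1 : l1 ≤ t) (r2 : t ≤ l2) : lamSum h t t = 0 := by
  have : ∀ p : ℕ × ℕ, sewTerm h t t p = 0 := by
    intro ⟨j, k⟩
    simp only [sewTerm]
    split
    · have e : ∀ N i : ℕ, ppt t t N i = t := by intro N i; simp [ppt]
      rw [e, e, e]
      exact hdeg t t t r1 le_rfl le_rfl r2 (Or.inl rfl)
    · rfl
  simp only [lamSum]
  rw [tsum_congr this]
  exact tsum_zero

lemma B_diag {a : ℝ} (r1 : l1 ≤ a) (r2 : a ≤ l2) : B a a = 0 := by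
  have h1 := hB a a a r1 le_rfl le_rfl r2
  have h2 := hdeg a a a r1 le_rfl le_rfl r2 (Or.inl rfl)
  rw [h2] at h1
  have : -B a a = 0 := by rw [← h1]; abel
  simpa using neg_eq_zero.mp this

lemma Ival_pt (hμ : 1 < μ) (hK : 0 ≤ K) {a b : ℝ}
    (r1 : l1 ≤ a) (hab : a ≤ b) (r2 : b ≤ l2) {N k : ℕ} (hN : N ≠ 0) (hk : k ≤ N) :
    B a b - lamSum h a b
      = (B a (ppt a b N k) - lamSum h a (ppt a b N k))
        + (B (ppt a b N k) b - lamSum h (ppt a b N k) b) := by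
  by_cases hk0 : k = 0
  · subst hk0
    rw [ppt_zero, B_diag hb hB hdeg r1 (le_trans hab r2),
      lamSum_diag hb hdeg r1 (le_trans hab r2)]
    abel
  by_cases hkN : k = N
  · subst hkN
    rw [ppt_self a b hN, B_diag hb hB hdeg (le_trans r1 hab) r2,
      lamSum_diag hb hdeg (le_trans r1 hab) r2]
    abel
  have hkN' : k < N := lt_of_le_of_ne hk hkN
  set u := ppt a b N k with hu
  have hau : a ≤ u := le_ppt hab _ _
  have hub : u ≤ b := ppt_le hab hN hk
  have hu2 : u ≤ l2 := le_trans hub r2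
  have hu1 : l1 ≤ u := le_trans r1 hau
  have main := Ival_split hb hB hμ hK hN r1 hab r2
  have left := Ival_split hb hB hμ hK (N := k) hk0 r1 hau hu2
  have right := Ival_split hb hB hμ hK (N := N - k) (by omega) hu1 hub r2
  have eleft : ∀ i : ℕ, ppt a u k i = ppt a b N i := fun i => ppt_section hN hk0 i
  have eright : ∀ i : ℕ, ppt u b (N-k) i = ppt a b N (k+i) :=
    fun i => ppt_section' hN hk (by omega) i
  rw [main, left, right]
  have el : (∑ i ∈ Finset.range k,
      (B (ppt a u k i) (ppt a u k (i+1)) - lamSum h (ppt a u k i) (ppt a u k (i+1))))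
      = ∑ i ∈ Finset.range k,
      (B (ppt a b N i) (ppt a b N (i+1)) - lamSum h (ppt a b N i) (ppt a b N (i+1))) := by
    refine Finset.sum_congr rfl (fun i _ => ?_)
    rw [eleft i, eleft (i+1)]
  have er : (∑ i ∈ Finset.range (N-k),
      (B (ppt u b (N-k) i) (ppt u b (N-k) (i+1)) - lamSum h (ppt u b (N-k) i) (ppt u b (N-k) (i+1))))
      = ∑ i ∈ Finset.range (N-k),
      (B (ppt a b N (k+i)) (ppt a b N (k+i+1)) - lamSum h (ppt a b N (k+i)) (ppt a b N (k+i+1))) := by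
    refine Finset.sum_congr rfl (fun i _ => ?_)
    rw [eright i, eright (i+1), show k+(i+1) = k+i+1 from by omega]
  rw [el, er, ← Finset.sum_range_add, show k + (N-k) = N from by omega]


omit hb hB hdeg in
lemma sewArgs {s t : ℝ} (hst : s ≤ t) {j k : ℕ} (hk : k < 2^j) :
    s ≤ ppt s t (2^j) k ∧ ppt s t (2^j) k ≤ ppt s t (2^(j+1)) (2*k+1)
      ∧ ppt s t (2^(j+1)) (2*k+1) ≤ ppt s t (2^j) (k+1) ∧ ppt s t (2^j) (k+1) ≤ t := by
  have hNj : (2^j : ℕ) ≠ 0 := (Nat.two_pow_pos j).ne'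
  have ea : ppt s t (2^j) k = ppt s t (2^(j+1)) (2*k) := by
    rw [show (2^(j+1) : ℕ) = 2^j * 2 by ring, show 2*k = k*2 by ring,
      ppt_mul_left hNj two_ne_zero]
  have eb : ppt s t (2^j) (k+1) = ppt s t (2^(j+1)) (2*k+1+1) := by
    rw [show (2^(j+1) : ℕ) = 2^j * 2 by ring, show 2*k+1+1 = (k+1)*2 by ring,
      ppt_mul_left hNj two_ne_zero]
  refine ⟨le_ppt hst _ _, ?_, ?_, ppt_le hst hNj (by omega)⟩
  · rw [ea]; exact ppt_mono hst _ (by omega)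
  · rw [eb]; exact ppt_mono hst _ (by omega)

omit hb hB hdeg in
lemma gBnd_mono {D1 D2 : ℝ} (hμ0 : 0 ≤ μ) (hK : 0 ≤ K) (h1 : 0 ≤ D1) (h12 : D1 ≤ D2)
    (p : ℕ × ℕ) : gBnd μ K D1 p ≤ gBnd μ K D2 p := by
  unfold gBnd
  split
  · exact mul_le_mul_of_nonneg_left
      (Real.rpow_le_rpow (by positivity) (by gcongr) hμ0) hK
  · exact le_refl 0


omit hB hdeg in
lemma lamSum_contOn (hμ : 1 < μ) (hK : 0 ≤ K) (hll : l1 ≤ l2)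
    (hcont3 : ContinuousOn (fun p : ℝ × ℝ × ℝ => h p.1 p.2.1 p.2.2)
      {p : ℝ × ℝ × ℝ | l1 ≤ p.1 ∧ p.1 ≤ p.2.1 ∧ p.2.1 ≤ p.2.2 ∧ p.2.2 ≤ l2}) :
    ContinuousOn (fun q : ℝ × ℝ => lamSum h q.1 q.2)
      {q : ℝ × ℝ | l1 ≤ q.1 ∧ q.1 ≤ q.2 ∧ q.2 ≤ l2} := by
  apply continuousOn_tsum (u := gBnd μ K (l2-l1))
  · rintro ⟨j, k⟩
    by_cases hk : k < 2^j
    · have e : (fun q : ℝ × ℝ => sewTerm h q.1 q.2 (j, k))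
          = (fun p : ℝ × ℝ × ℝ => h p.1 p.2.1 p.2.2) ∘
            (fun q : ℝ × ℝ => (ppt q.1 q.2 (2^j) k,
              ppt q.1 q.2 (2^(j+1)) (2*k+1), ppt q.1 q.2 (2^j) (k+1))) := by
        funext q
        simp only [sewTerm, if_pos hk, Function.comp]
      rw [e]
      apply ContinuousOn.comp hcont3
      · apply Continuous.continuousOn
        unfold ppt
        fun_prop
      · rintro ⟨s, t⟩ ⟨hq1, hq2, hq3⟩
        obtain ⟨w1, w2, w3, w4⟩ := sewArgs hq2 hk
        exact ⟨le_trans hq1 w1, w2, w3, le_trans w4 hq3⟩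
    · have e : (fun q : ℝ × ℝ => sewTerm h q.1 q.2 (j, k)) = fun _ => 0 := by
        funext q
        simp only [sewTerm, if_neg hk]
      rw [e]
      exact continuousOn_const
  · exact gBnd_summable hμ hK (by linarith)
  · rintro p ⟨s, t⟩ ⟨hq1, hq2, hq3⟩
    exact le_trans (sewTerm_le hb hq1 hq2 hq3 p)
      (gBnd_mono (by linarith) hK (by linarith) (by linarith) p)


lemma Ival_add (hμ : 1 < μ) (hK : 0 ≤ K)
    (hIcont : ContinuousOn (fun q : ℝ × ℝ => B q.1 q.2 - lamSum h q.1 q.2)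
      {q : ℝ × ℝ | l1 ≤ q.1 ∧ q.1 ≤ q.2 ∧ q.2 ≤ l2})
    {a u b : ℝ} (r1 : l1 ≤ a) (hau : a ≤ u) (hub : u ≤ b) (r2 : b ≤ l2) :
    B a b - lamSum h a b
      = (B a u - lamSum h a u) + (B u b - lamSum h u b) := by
  by_cases hab : a = b
  · have hua : u = a := le_antisymm (hab ▸ hub) hau
    subst hua hab
    rw [B_diag hb hB hdeg r1 r2, lamSum_diag hb hdeg r1 r2]
    abel
  have hab' : a < b := lt_of_le_of_ne (le_trans hau hub) hab
  have hba : (0:ℝ) < b - a := by linarith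
  set Iv : ℝ → ℝ → V := fun x y => B x y - lamSum h x y with hIv
  -- approximating partition points
  set x : ℕ → ℝ := fun n => (u-a)*(n+1)/(b-a) with hx
  set kn : ℕ → ℕ := fun n => ⌊x n⌋₊ with hkn
  set un : ℕ → ℝ := fun n => ppt a b (n+1) (kn n) with hun
  have hx0 : ∀ n, 0 ≤ x n := by
    intro n
    apply div_nonneg _ hba.le
    have : (0:ℝ) ≤ (n:ℝ)+1 := by positivity
    nlinarith
  have hxle : ∀ n : ℕ, x n ≤ ((n+1 : ℕ) : ℝ) := by
    intro n
    rw [hx, div_le_iff₀ hba]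
    push_cast
    nlinarith
  have hknle : ∀ n, kn n ≤ n+1 := by
    intro n
    have := Nat.floor_le_of_le (hxle n)
    simpa using this
  have hmem : ∀ n, un n ∈ Icc a b := by
    intro n
    exact ⟨le_ppt hab'.le _ _, ppt_le hab'.le (Nat.succ_ne_zero n) (hknle n)⟩
  have hueq : ∀ n : ℕ, a + (x n) * (b-a)/((n:ℝ)+1) = u := by
    intro n
    rw [hx]
    field_simp
    ring
  have h2 : ∀ n : ℕ, (0:ℝ) < (n:ℝ)+1 := fun n => by positivity
  have h5 : ∀ n : ℕ, (0:ℝ) ≤ (b-a)/((n:ℝ)+1) := fun n => div_nonneg hba.le (h2 n).le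
  have hunval : ∀ n, un n = a + (kn n : ℝ) * ((b-a)/((n:ℝ)+1)) := by
    intro n
    simp only [hun]
    unfold ppt
    push_cast
    ring
  have hun_le : ∀ n, un n ≤ u := by
    intro n
    have h1 : (kn n : ℝ) ≤ x n := Nat.floor_le (hx0 n)
    calc un n = a + (kn n : ℝ) * ((b-a)/((n:ℝ)+1)) := hunval n
      _ ≤ a + x n * ((b-a)/((n:ℝ)+1)) := by nlinarith [h5 n]
      _ = u := by rw [← hueq n]; ring
  have hu_lt : ∀ n, u - un n ≤ (b-a)/((n:ℝ)+1) := by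
    intro n
    have h1 : x n < kn n + 1 := Nat.lt_floor_add_one (x n)
    calc u - un n = (x n - (kn n : ℝ)) * ((b-a)/((n:ℝ)+1)) := by
          rw [← hueq n, hunval n]; ring
      _ ≤ 1 * ((b-a)/((n:ℝ)+1)) :=
          mul_le_mul_of_nonneg_right (by linarith) (h5 n)
      _ = (b-a)/((n:ℝ)+1) := one_mul _
  have hun_tendsto : Filter.Tendsto un Filter.atTop (nhds u) := by
    have hb0 : Filter.Tendsto (fun n : ℕ => (b-a) * (1/((n:ℝ)+1))) Filter.atTop (nhds 0) := by
      have := tendsto_one_div_add_atTop_nhds_zero_nat (𝕜 := ℝ)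
      simpa using this.const_mul (b-a)
    have hsq : Filter.Tendsto (fun n => un n - u) Filter.atTop (nhds 0) := by
      apply squeeze_zero_norm (a := fun n : ℕ => (b-a) * (1/((n:ℝ)+1))) _ hb0
      intro n
      show ‖un n - u‖ ≤ (b-a) * (1/((n:ℝ)+1))
      have hlt := hu_lt n
      have e : (b-a) * (1/((n:ℝ)+1)) = (b-a)/((n:ℝ)+1) := by ring
      rw [Real.norm_eq_abs, abs_of_nonpos (by linarith [hun_le n]), e]
      linarith
    have := hsq.add_const u
    simpa using this
  -- continuity of the two pieces
  have c1 : ContinuousOn (fun v : ℝ => Iv a v) (Icc a b) := by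
    have := ContinuousOn.comp (f := fun v : ℝ => ((a : ℝ), v)) hIcont
      (Continuous.continuousOn (by fun_prop))
      (fun v (hv : v ∈ Icc a b) => ⟨r1, hv.1, le_trans hv.2 r2⟩)
    exact this
  have c2 : ContinuousOn (fun v : ℝ => Iv v b) (Icc a b) := by
    have := ContinuousOn.comp (f := fun v : ℝ => (v, (b : ℝ))) hIcont
      (Continuous.continuousOn (by fun_prop))
      (fun v (hv : v ∈ Icc a b) => ⟨le_trans r1 hv.1, hv.2, r2⟩)
    exact this
  have cF : ContinuousOn (fun v : ℝ => Iv a v + Iv v b) (Icc a b) := c1.add c2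
  -- the partition identity at each un n
  have hFn : ∀ n : ℕ, Iv a (un n) + Iv (un n) b = Iv a b := by
    intro n
    exact (Ival_pt hb hB hdeg hμ hK r1 hab'.le r2 (Nat.succ_ne_zero n) (hknle n)).symm
  -- pass to the limit
  have humem : u ∈ Icc a b := ⟨hau, hub⟩
  have hlim : Filter.Tendsto (fun n => Iv a (un n) + Iv (un n) b) Filter.atTop
      (nhds (Iv a u + Iv u b)) := by
    have hwithin : Filter.Tendsto un Filter.atTop (nhdsWithin u (Icc a b)) :=
      tendsto_nhdsWithin_iff.2 ⟨hun_tendsto, Filter.Eventually.of_forall hmem⟩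
    exact ((cF u humem).tendsto).comp hwithin
  have hconst : Filter.Tendsto (fun n => Iv a (un n) + Iv (un n) b) Filter.atTop
      (nhds (Iv a b)) := by
    have e : (fun n => Iv a (un n) + Iv (un n) b) = fun _ => Iv a b := funext hFn
    rw [e]
    exact tendsto_const_nhds
  exact tendsto_nhds_unique hconst hlim

end Core2

section Unique
variable {g : ℝ → ℝ → V}
variable (hg : ∀ a u b : ℝ, l1 ≤ a → a ≤ u → u ≤ b → b ≤ l2 → g a b = g a u + g u b)

include hg

lemma addSplit : ∀ N : ℕ, N ≠ 0 → ∀ a b : ℝ, l1 ≤ a → a ≤ b → b ≤ l2 →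
    g a b = ∑ i ∈ Finset.range N, g (ppt a b N i) (ppt a b N (i+1)) := by
  intro N
  induction N with
  | zero => exact fun h0 => absurd rfl h0
  | succ n ih =>
    intro _ a b r1 hab r2
    by_cases hn : n = 0
    · subst hn
      simp [ppt_zero, ppt_self a b one_ne_zero]
    · have hn1 : (n+1 : ℕ) ≠ 0 := Nat.succ_ne_zero n
      set p := ppt a b (n+1) 1 with hp
      have hap : a ≤ p := le_ppt hab _ _
      have hpb : p ≤ b := ppt_le hab hn1 (by omega)
      have rhs : g p b = ∑ i ∈ Finset.range n, g (ppt a b (n+1) (i+1)) (ppt a b (n+1) (i+1+1)) := by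
        rw [ih hn p b (le_trans r1 hap) hpb r2]
        refine Finset.sum_congr rfl (fun i _ => ?_)
        have e1 : ppt p b n i = ppt a b (n+1) (1+i) := by
          rw [hp, show n = (n+1) - 1 from rfl]
          exact ppt_section' hn1 (by omega) (by omega) i
        have e2 : ppt p b n (i+1) = ppt a b (n+1) (1+(i+1)) := by
          rw [hp, show n = (n+1) - 1 from rfl]
          exact ppt_section' hn1 (by omega) (by omega) (i+1)
        rw [e1, e2, show 1+i = i+1 by omega, show 1+(i+1) = i+1+1 by omega]
      rw [Finset.sum_range_succ', ← rhs, ppt_zero, ← hp]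
      rw [hg a p b r1 hap hpb r2]
      exact add_comm _ _

lemma vanish_of_holder (hμ : 1 < μ) {C : ℝ} (hC : 0 ≤ C)
    (hdiagg : ∀ a : ℝ, l1 ≤ a → a ≤ l2 → g a a = 0)
    (hgb : ∀ a b : ℝ, l1 ≤ a → a < b → b ≤ l2 → ‖g a b‖ ≤ C * (b-a)^μ) :
    ∀ a b : ℝ, l1 ≤ a → a ≤ b → b ≤ l2 → g a b = 0 := by
  intro a b r1 hab r2
  rcases eq_or_lt_of_le hab with he | hlt
  · subst he; exact hdiagg a r1 r2
  have hba : (0:ℝ) < b - a := by linarith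
  have key : ∀ n : ℕ, ‖g a b‖ ≤ C * (b-a)^μ * ((n+1:ℕ):ℝ)^((1:ℝ)-μ) := by
    intro n
    have hn1 : (n+1 : ℕ) ≠ 0 := Nat.succ_ne_zero n
    have split := addSplit hg (n+1) hn1 a b r1 hab r2
    have hstep : ∀ i : ℕ, i < n+1 → ‖g (ppt a b (n+1) i) (ppt a b (n+1) (i+1))‖
        ≤ C * ((b-a)/((n+1:ℕ):ℝ))^μ := by
      intro i hi
      have hlen : ppt a b (n+1) (i+1) - ppt a b (n+1) i = (b-a)/((n+1:ℕ):ℝ) :=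
        ppt_succ_sub hn1 i
      have hpos : (0:ℝ) < (b-a)/((n+1:ℕ):ℝ) := by positivity
      have := hgb (ppt a b (n+1) i) (ppt a b (n+1) (i+1))
        (le_trans r1 (le_ppt hab _ _)) (by linarith [hlen]) 
        (le_trans (ppt_le hab hn1 (by omega)) r2)
      rwa [hlen] at this
    calc ‖g a b‖ ≤ ∑ i ∈ Finset.range (n+1),
          ‖g (ppt a b (n+1) i) (ppt a b (n+1) (i+1))‖ := by
          rw [split]; exact norm_sum_le _ _
      _ ≤ ∑ i ∈ Finset.range (n+1), C * ((b-a)/((n+1:ℕ):ℝ))^μ :=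
          Finset.sum_le_sum (fun i hi => hstep i (Finset.mem_range.1 hi))
      _ = ((n+1:ℕ):ℝ) * (C * ((b-a)/((n+1:ℕ):ℝ))^μ) := by
          rw [Finset.sum_const, Finset.card_range, nsmul_eq_mul]
      _ = C * (b-a)^μ * ((n+1:ℕ):ℝ)^((1:ℝ)-μ) :=
          nat_rpow_helper hn1 μ (b-a) C hba.le
  have htend : Filter.Tendsto (fun n : ℕ => C * (b-a)^μ * ((n+1:ℕ):ℝ)^((1:ℝ)-μ))
      Filter.atTop (nhds 0) := by
    have h1 : Filter.Tendsto (fun n : ℕ => ((n+1:ℕ):ℝ)) Filter.atTop Filter.atTop := by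
      apply Filter.Tendsto.comp tendsto_natCast_atTop_atTop
      exact Filter.tendsto_add_atTop_nat 1
    have h2 : Filter.Tendsto (fun x : ℝ => x ^ (-(μ-1))) Filter.atTop (nhds 0) :=
      tendsto_rpow_neg_atTop (by linarith)
    have h3 := (h2.comp h1).const_mul (C * (b-a)^μ)
    simp only [Function.comp] at h3
    have e : (fun n : ℕ => C * (b-a)^μ * ((n+1:ℕ):ℝ)^((1:ℝ)-μ))
        = fun n : ℕ => C * (b-a)^μ * ((n+1:ℕ):ℝ)^(-(μ-1)) := by
      funext n
      rw [show (1:ℝ)-μ = -(μ-1) by ring]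
    rw [e]
    simpa using h3
  have : ‖g a b‖ ≤ 0 := ge_of_tendsto' htend key
  exact norm_le_zero_iff.1 this

end Unique
end

noncomputable section Decomp
variable {V : Type} [NormedAddCommGroup V] [NormedSpace ℝ V] [CompleteSpace V]

/-- Pointwise bound on `h` coming from a decomposition with finite `μ`-norm sum. -/
lemma decomp_bound {l1 l2 μ : ℝ} {h : ℝ → ℝ → ℝ → V} {hs : ℕ → ℝ → ℝ → ℝ → V} {ρ : ℕ → ℝ}
    (hμ : 1 < μ)
    (hinc : ∀ i, IsTwoIncrement l1 l2 (hs i))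
    (hρ : ∀ i, 0 < ρ i ∧ ρ i < μ)
    (hdecomp : ∀ s u t : ℝ, l1 ≤ s → s ≤ u → u ≤ t → t ≤ l2 →
        HasSum (fun i => hs i s u t) (h s u t))
    (hS : ∑' i, twoIncNorm l1 l2 (ρ i) (μ - ρ i) (hs i) ≠ ⊤) :
    ∀ s u t : ℝ, l1 ≤ s → s ≤ u → u ≤ t → t ≤ l2 → ∀ d : ℝ, 0 ≤ d → u - s ≤ d → t - u ≤ d →
      ‖h s u t‖ ≤ (∑' i, twoIncNorm l1 l2 (ρ i) (μ - ρ i) (hs i)).toReal * d ^ μ := by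
  intro s u t h1 h2 h3 h4 d hd0 hdu hdt
  have hdμ : (0:ℝ) ≤ d ^ μ := Real.rpow_nonneg hd0 μ
  have single : ∀ i, ‖hs i s u t‖ ≤ (twoIncNorm l1 l2 (ρ i) (μ - ρ i) (hs i)).toReal * d ^ μ := by
    intro i
    have hNitop : twoIncNorm l1 l2 (ρ i) (μ - ρ i) (hs i) ≠ ⊤ :=
      ENNReal.ne_top_of_tsum_ne_top hS i
    by_cases hdegcase : s = u ∨ u = t
    · rw [(hinc i).2 s u t h1 h2 h3 h4 hdegcase, norm_zero]
      positivity
    · push_neg at hdegcase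
      have hsu : s < u := lt_of_le_of_ne h2 hdegcase.1
      have hut : u < t := lt_of_le_of_ne h3 hdegcase.2
      have hd : (0:ℝ) < d := lt_of_lt_of_le (by linarith) hdu
      set D : ℝ := (u - s) ^ (ρ i) * (t - u) ^ (μ - ρ i) with hD
      have hD0 : (0:ℝ) < D := mul_pos (Real.rpow_pos_of_pos (by linarith) _)
        (Real.rpow_pos_of_pos (by linarith) _)
      have hsup := le_iSup (fun p : {p : ℝ × ℝ × ℝ // l1 ≤ p.1 ∧ p.1 ≤ p.2.1 ∧ p.2.1 ≤ p.2.2 ∧ p.2.2 ≤ l2} =>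
        ENNReal.ofReal (‖hs i p.1.1 p.1.2.1 p.1.2.2‖ /
          ((p.1.2.1 - p.1.1) ^ (ρ i) * (p.1.2.2 - p.1.2.1) ^ (μ - ρ i))))
        (⟨(s, u, t), ⟨h1, h2, h3, h4⟩⟩ : {p : ℝ × ℝ × ℝ // l1 ≤ p.1 ∧ p.1 ≤ p.2.1 ∧ p.2.1 ≤ p.2.2 ∧ p.2.2 ≤ l2})
      have hle : ‖hs i s u t‖ / D ≤ (twoIncNorm l1 l2 (ρ i) (μ - ρ i) (hs i)).toReal := by
        rw [← ENNReal.ofReal_le_iff_le_toReal hNitop]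
        exact hsup
      have hDd : D ≤ d ^ μ := by
        have e1 : (u - s) ^ (ρ i) ≤ d ^ (ρ i) :=
          Real.rpow_le_rpow (by linarith) hdu (hρ i).1.le
        have e2 : (t - u) ^ (μ - ρ i) ≤ d ^ (μ - ρ i) :=
          Real.rpow_le_rpow (by linarith) hdt (by linarith [(hρ i).2])
        have e3 : d ^ (ρ i) * d ^ (μ - ρ i) = d ^ μ := by
          rw [← Real.rpow_add hd]
          congr 1
          ring
        calc D ≤ d ^ (ρ i) * d ^ (μ - ρ i) := by
              have := Real.rpow_nonneg (show (0:ℝ) ≤ u - s by linarith) (ρ i)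
              have := Real.rpow_nonneg hd.le (ρ i)
              nlinarith [Real.rpow_nonneg (show (0:ℝ) ≤ t - u by linarith) (μ - ρ i)]
          _ = d ^ μ := e3
      calc ‖hs i s u t‖ ≤ (twoIncNorm l1 l2 (ρ i) (μ - ρ i) (hs i)).toReal * D := by
            rw [div_le_iff₀ hD0] at hle
            linarith
        _ ≤ (twoIncNorm l1 l2 (ρ i) (μ - ρ i) (hs i)).toReal * d ^ μ :=
            mul_le_mul_of_nonneg_left hDd ENNReal.toReal_nonneg
  have hsummN : Summable (fun i => (twoIncNorm l1 l2 (ρ i) (μ - ρ i) (hs i)).toReal) :=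
    ENNReal.summable_toReal hS
  have hsumm : Summable (fun i => ‖hs i s u t‖) :=
    Summable.of_nonneg_of_le (fun i => norm_nonneg _) single (hsummN.mul_right _)
  have e0 : h s u t = ∑' i, hs i s u t := (hdecomp s u t h1 h2 h3 h4).tsum_eq.symm
  calc ‖h s u t‖ = ‖∑' i, hs i s u t‖ := by rw [e0]
    _ ≤ ∑' i, ‖hs i s u t‖ := norm_tsum_le_tsum_norm hsumm
    _ ≤ ∑' i, (twoIncNorm l1 l2 (ρ i) (μ - ρ i) (hs i)).toReal * d ^ μ :=
        Summable.tsum_le_tsum single hsumm (hsummN.mul_right _)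
    _ = (∑' i, (twoIncNorm l1 l2 (ρ i) (μ - ρ i) (hs i)).toReal) * d ^ μ := tsum_mul_right
    _ = (∑' i, twoIncNorm l1 l2 (ρ i) (μ - ρ i) (hs i)).toReal * d ^ μ := by
        rw [ENNReal.tsum_toReal_eq (fun i => ENNReal.ne_top_of_tsum_ne_top hS i)]

/-- Extraction of a decomposition witnessing `muNorm < b`. -/
lemma muNorm_extract {l1 l2 μ : ℝ} {h : ℝ → ℝ → ℝ → V} {b : ℝ≥0∞}
    (hlt : muNorm l1 l2 μ h < b) :
    ∃ (hs : ℕ → ℝ → ℝ → ℝ → V) (ρ : ℕ → ℝ),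
      (∀ i, IsTwoIncrement l1 l2 (hs i)) ∧ (∀ i, 0 < ρ i ∧ ρ i < μ) ∧
      (∀ s u t : ℝ, l1 ≤ s → s ≤ u → u ≤ t → t ≤ l2 →
          HasSum (fun i => hs i s u t) (h s u t)) ∧
      ∑' i, twoIncNorm l1 l2 (ρ i) (μ - ρ i) (hs i) < b := by
  rw [muNorm] at hlt
  obtain ⟨hs, hlt⟩ := iInf_lt_iff.1 hlt
  obtain ⟨ρ, hlt⟩ := iInf_lt_iff.1 hlt
  obtain ⟨c1, hlt⟩ := iInf_lt_iff.1 hlt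
  obtain ⟨c2, hlt⟩ := iInf_lt_iff.1 hlt
  obtain ⟨c3, hlt⟩ := iInf_lt_iff.1 hlt
  exact ⟨hs, ρ, c1, c2, c3, hlt⟩

end Decomp

/-- **The sewing map.** For `μ > 1` there is a constant `c_μ`, depending only on `μ`, such that
for every Banach space `V`, every interval `[l1, l2]` and every 2-increment `h` with `δh = 0`
and `‖h‖_μ < ∞`, there is a unique continuous map `Λh` on the simplex, vanishing on the diagonal,
with finite `μ`-Hölder sup and `(Λh)_{st} - (Λh)_{su} - (Λh)_{ut} = h_{sut}`; moreover
`h ↦ Λh` is linear and `sup_{s<t} ‖(Λh)_{st}‖/(t-s)^μ ≤ c_μ ‖h‖_μ`. -/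
theorem sewing_map (μ : ℝ) (hμ : 1 < μ) :
    ∃ c : ℝ, 0 < c ∧
      ∀ (V : Type) (_i1 : NormedAddCommGroup V) (_i2 : NormedSpace ℝ V)
        (_i3 : CompleteSpace V),
      ∃ L : (ℝ → ℝ → ℝ → V) → (ℝ → ℝ → V),
        (∀ h₁ h₂ : ℝ → ℝ → ℝ → V, L (h₁ + h₂) = L h₁ + L h₂) ∧
        (∀ (a : ℝ) (h : ℝ → ℝ → ℝ → V), L (a • h) = a • L h) ∧
        ∀ (l1 l2 : ℝ), l1 < l2 →
          ∀ h : ℝ → ℝ → ℝ → V, IsTwoIncrement l1 l2 h →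
            (∀ s u v t : ℝ, l1 ≤ s → s ≤ u → u ≤ v → v ≤ t → t ≤ l2 →
              h u v t - h s v t + h s u t - h s u v = 0) →
            muNorm l1 l2 μ h < ⊤ →
            IsSewing l1 l2 μ h (L h) ∧
            (⨆ p : {p : ℝ × ℝ // l1 ≤ p.1 ∧ p.1 < p.2 ∧ p.2 ≤ l2},
                ENNReal.ofReal (‖L h p.1.1 p.1.2‖ / (p.1.2 - p.1.1) ^ μ))
              ≤ ENNReal.ofReal c * muNorm l1 l2 μ h ∧
            ∀ Λ' : ℝ → ℝ → V, IsSewing l1 l2 μ h Λ' →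
              ∀ s t : ℝ, l1 ≤ s → s ≤ t → t ≤ l2 → Λ' s t = L h s t := by
  classical
  set c : ℝ := (1 - (2:ℝ)^((1:ℝ)-μ))⁻¹ with hc
  have hr1 : (2:ℝ)^((1:ℝ)-μ) < 1 := (geom_fact hμ).2
  have hcpos : 0 < c := by
    rw [hc]
    have h0 : (0:ℝ) < 1 - (2:ℝ)^((1:ℝ)-μ) := by linarith
    exact inv_pos.2 h0
  refine ⟨c, hcpos, ?_⟩
  intro V _i1 _i2 _i3
  refine ⟨Lmap V, Lmap_add, Lmap_smul, ?_⟩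
  intro l1 l2 hl12 h hinc hcocy hmu
  obtain ⟨hcont3, hdeg0⟩ := hinc
  obtain ⟨hs, ρ, c1, c2, c3, hS⟩ := muNorm_extract hmu
  set K : ℝ := (∑' i, twoIncNorm l1 l2 (ρ i) (μ - ρ i) (hs i)).toReal with hKdef
  have hK0 : 0 ≤ K := ENNReal.toReal_nonneg
  have hb : ∀ s u t : ℝ, l1 ≤ s → s ≤ u → u ≤ t → t ≤ l2 →
      ∀ d : ℝ, 0 ≤ d → u - s ≤ d → t - u ≤ d → ‖h s u t‖ ≤ K * d ^ μ := by
    intro s u t h1 h2 h3 h4 d hd0 hdu hdt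
    exact decomp_bound hμ c1 c2 c3 hS.ne s u t h1 h2 h3 h4 d hd0 hdu hdt
  have hll : l1 ≤ l2 := hl12.le
  have hsummable : ∀ s t : ℝ, l1 ≤ s → s ≤ t → t ≤ l2 → Summable (sewTerm h s t) :=
    fun s t h1 h2 h3 => sewTerm_summable hb hμ hK0 h1 h2 h3
  have hL : ∀ s t : ℝ, l1 ≤ s → s ≤ t → t ≤ l2 → Lmap V h s t = lamSum h s t :=
    fun s t h1 h2 h3 => Lmap_eq_tsum (hsummable s t h1 h2 h3)
  have hcontLam := lamSum_contOn hb hμ hK0 hll hcont3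
  have hdiag : ∀ t : ℝ, l1 ≤ t → t ≤ l2 → lamSum h t t = 0 :=
    fun t h1 h2 => lamSum_diag hb hdeg0 h1 h2
  have hbound : ∀ s t : ℝ, l1 ≤ s → s ≤ t → t ≤ l2 →
      ‖lamSum h s t‖ ≤ c * (K * (t-s)^μ) :=
    fun s t h1 h2 h3 => lamSum_le hb hμ hK0 h1 h2 h3
  -- the exact primitive `B` and the coboundary identity
  set B : ℝ → ℝ → V := fun a b => -h l1 a b with hBdef
  have hB : ∀ a u b : ℝ, l1 ≤ a → a ≤ u → u ≤ b → b ≤ l2 →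
      B a b - B a u - B u b = h a u b := by
    intro a u b r1 hau hub r2
    have h2 := hcocy l1 a u b (le_refl l1) r1 hau hub r2
    have h3 : h a u b - (B a b - B a u - B u b) = 0 := by
      simp only [hBdef]
      calc h a u b - ((-h l1 a b) - (-h l1 a u) - (-h l1 u b))
          = h a u b - h l1 u b + h l1 a b - h l1 a u := by abel
        _ = 0 := h2
    exact (sub_eq_zero.1 h3).symm
  have hBc : ContinuousOn (fun q : ℝ × ℝ => B q.1 q.2)
      {q : ℝ × ℝ | l1 ≤ q.1 ∧ q.1 ≤ q.2 ∧ q.2 ≤ l2} := by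
    have hcomp := ContinuousOn.comp (f := fun q : ℝ × ℝ => (l1, q.1, q.2)) hcont3
      (Continuous.continuousOn (by fun_prop))
      (fun q (hq : q ∈ {q : ℝ × ℝ | l1 ≤ q.1 ∧ q.1 ≤ q.2 ∧ q.2 ≤ l2}) =>
        ⟨le_refl l1, hq.1, hq.2.1, hq.2.2⟩)
    have hcomp' : ContinuousOn (fun q : ℝ × ℝ => h l1 q.1 q.2)
        {q : ℝ × ℝ | l1 ≤ q.1 ∧ q.1 ≤ q.2 ∧ q.2 ≤ l2} := hcomp
    exact hcomp'.neg
  have hIcont : ContinuousOn (fun q : ℝ × ℝ => B q.1 q.2 - lamSum h q.1 q.2)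
      {q : ℝ × ℝ | l1 ≤ q.1 ∧ q.1 ≤ q.2 ∧ q.2 ≤ l2} := hBc.sub hcontLam
  have hcob : ∀ s u t : ℝ, l1 ≤ s → s ≤ u → u ≤ t → t ≤ l2 →
      lamSum h s t - lamSum h s u - lamSum h u t = h s u t := by
    intro s u t h1 h2 h3 h4
    have hIv := Ival_add hb hB hdeg0 hμ hK0 hIcont h1 h2 h3 h4
    have hBs := hB s u t h1 h2 h3 h4
    have goal_eq : lamSum h s t - lamSum h s u - lamSum h u t - (B s t - B s u - B u t)
        = ((B s u - lamSum h s u) + (B u t - lamSum h u t)) - (B s t - lamSum h s t) := by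
      abel
    have e2 : ((B s u - lamSum h s u) + (B u t - lamSum h u t))
        - (B s t - lamSum h s t) = 0 := by
      rw [← hIv]; exact sub_self _
    have e3 := sub_eq_zero.1 (goal_eq.trans e2)
    rw [e3, hBs]
  -- sup bound depending only on a pointwise bound constant
  have supK : ∀ K' : ℝ, 0 ≤ K' →
      (∀ s u t : ℝ, l1 ≤ s → s ≤ u → u ≤ t → t ≤ l2 →
        ∀ d : ℝ, 0 ≤ d → u - s ≤ d → t - u ≤ d → ‖h s u t‖ ≤ K' * d ^ μ) →
      (⨆ p : {p : ℝ × ℝ // l1 ≤ p.1 ∧ p.1 < p.2 ∧ p.2 ≤ l2},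
        ENNReal.ofReal (‖Lmap V h p.1.1 p.1.2‖ / (p.1.2 - p.1.1) ^ μ))
        ≤ ENNReal.ofReal (c * K') := by
    intro K' hK0' hb'
    apply iSup_le
    rintro ⟨⟨s, t⟩, hq1, hq2, hq3⟩
    have hst : s ≤ t := hq2.le
    have hpow : (0:ℝ) < (t - s) ^ μ := Real.rpow_pos_of_pos (by linarith) μ
    have hbd : ‖lamSum h s t‖ ≤ c * (K' * (t-s)^μ) := lamSum_le hb' hμ hK0' hq1 hst hq3
    simp only
    rw [hL s t hq1 hst hq3]
    apply ENNReal.ofReal_le_ofReal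
    rw [div_le_iff₀ hpow]
    calc ‖lamSum h s t‖ ≤ c * (K' * (t-s)^μ) := hbd
      _ = (c * K') * (t-s)^μ := by ring
  have hsupLe := supK K hK0 hb
  -- IsSewing
  have hsew : IsSewing l1 l2 μ h (Lmap V h) := by
    refine ⟨?_, ?_, ?_, ?_⟩
    · exact hcontLam.congr (fun q hq => hL q.1 q.2 hq.1 hq.2.1 hq.2.2)
    · intro t h1 h2
      rw [hL t t h1 le_rfl h2]
      exact hdiag t h1 h2
    · exact lt_of_le_of_lt hsupLe ENNReal.ofReal_lt_top
    · intro s u t h1 h2 h3 h4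
      rw [hL s t h1 (le_trans h2 h3) h4, hL s u h1 h2 (le_trans h3 h4),
        hL u t (le_trans h1 h2) h3 h4]
      exact hcob s u t h1 h2 h3 h4
  -- norm bound against muNorm
  have hnorm : (⨆ p : {p : ℝ × ℝ // l1 ≤ p.1 ∧ p.1 < p.2 ∧ p.2 ≤ l2},
      ENNReal.ofReal (‖Lmap V h p.1.1 p.1.2‖ / (p.1.2 - p.1.1) ^ μ))
      ≤ ENNReal.ofReal c * muNorm l1 l2 μ h := by
    have hofc0 : ENNReal.ofReal c ≠ 0 := (ENNReal.ofReal_pos.2 hcpos).ne'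
    apply ENNReal.le_of_forall_pos_le_add
    intro ε hε _
    have hδpos : (0:ℝ≥0∞) < (ε : ℝ≥0∞) / ENNReal.ofReal c :=
      ENNReal.div_pos (by exact_mod_cast hε.ne') ENNReal.ofReal_ne_top
    have hlt : muNorm l1 l2 μ h < muNorm l1 l2 μ h + (ε : ℝ≥0∞) / ENNReal.ofReal c :=
      ENNReal.lt_add_right hmu.ne hδpos.ne'
    obtain ⟨hs', ρ', d1, d2, d3, dS⟩ := muNorm_extract hlt
    have hSfin : (∑' i, twoIncNorm l1 l2 (ρ' i) (μ - ρ' i) (hs' i)) ≠ ⊤ := by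
      exact (lt_of_lt_of_le dS le_top).ne
    set K2 := (∑' i, twoIncNorm l1 l2 (ρ' i) (μ - ρ' i) (hs' i)).toReal with hK2def
    have hb' : ∀ s u t : ℝ, l1 ≤ s → s ≤ u → u ≤ t → t ≤ l2 →
        ∀ d : ℝ, 0 ≤ d → u - s ≤ d → t - u ≤ d → ‖h s u t‖ ≤ K2 * d ^ μ := by
      intro s u t h1 h2 h3 h4 d hd0 hdu hdt
      exact decomp_bound hμ d1 d2 d3 hSfin s u t h1 h2 h3 h4 d hd0 hdu hdt
    have step1 := supK K2 ENNReal.toReal_nonneg hb'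
    have step2 : ENNReal.ofReal (c * K2) = ENNReal.ofReal c
        * (∑' i, twoIncNorm l1 l2 (ρ' i) (μ - ρ' i) (hs' i)) := by
      rw [ENNReal.ofReal_mul hcpos.le, hK2def, ENNReal.ofReal_toReal hSfin]
    calc (⨆ p : {p : ℝ × ℝ // l1 ≤ p.1 ∧ p.1 < p.2 ∧ p.2 ≤ l2},
        ENNReal.ofReal (‖Lmap V h p.1.1 p.1.2‖ / (p.1.2 - p.1.1) ^ μ))
        ≤ ENNReal.ofReal c * (∑' i, twoIncNorm l1 l2 (ρ' i) (μ - ρ' i) (hs' i)) := by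
          rw [← step2]; exact step1
      _ ≤ ENNReal.ofReal c * (muNorm l1 l2 μ h + (ε : ℝ≥0∞) / ENNReal.ofReal c) :=
          mul_le_mul_right dS.le _
      _ = ENNReal.ofReal c * muNorm l1 l2 μ h
          + ENNReal.ofReal c * ((ε : ℝ≥0∞) / ENNReal.ofReal c) := by rw [mul_add]
      _ ≤ ENNReal.ofReal c * muNorm l1 l2 μ h + (ε : ℝ≥0∞) :=
          add_le_add le_rfl ENNReal.mul_div_le
  -- uniqueness
  have huniq : ∀ Λ' : ℝ → ℝ → V, IsSewing l1 l2 μ h Λ' →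
      ∀ s t : ℝ, l1 ≤ s → s ≤ t → t ≤ l2 → Λ' s t = Lmap V h s t := by
    intro Λ' hΛ' s t h1 h2 h3
    obtain ⟨hc', hd', hfin', hcb'⟩ := hΛ'
    set M := (⨆ p : {p : ℝ × ℝ // l1 ≤ p.1 ∧ p.1 < p.2 ∧ p.2 ≤ l2},
      ENNReal.ofReal (‖Λ' p.1.1 p.1.2‖ / (p.1.2 - p.1.1) ^ μ)) with hM
    have hMne : M ≠ ⊤ := hfin'.ne
    set g : ℝ → ℝ → V := fun a b => Λ' a b - lamSum h a b with hgdef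
    have hgadd : ∀ a u b : ℝ, l1 ≤ a → a ≤ u → u ≤ b → b ≤ l2 →
        g a b = g a u + g u b := by
      intro a u b r1 hau hub r2
      have e1 := hcb' a u b r1 hau hub r2
      have e2 := hcob a u b r1 hau hub r2
      simp only [hgdef]
      have e3 : (Λ' a b - lamSum h a b)
          - ((Λ' a u - lamSum h a u) + (Λ' u b - lamSum h u b))
          = (Λ' a b - Λ' a u - Λ' u b)
            - (lamSum h a b - lamSum h a u - lamSum h u b) := by abel
      rw [e1, e2, sub_self] at e3
      exact sub_eq_zero.1 e3
    have hgdiag : ∀ a : ℝ, l1 ≤ a → a ≤ l2 → g a a = 0 := by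
      intro a r1 r2
      simp only [hgdef]
      rw [hd' a r1 r2, hdiag a r1 r2, sub_self]
    have hgb : ∀ a b : ℝ, l1 ≤ a → a < b → b ≤ l2 →
        ‖g a b‖ ≤ (M.toReal + c*K) * (b-a)^μ := by
      intro a b r1 hab r2
      have hpow : (0:ℝ) < (b-a)^μ := Real.rpow_pos_of_pos (by linarith) μ
      have hsupM : ENNReal.ofReal (‖Λ' a b‖ / (b-a)^μ) ≤ M := by
        rw [hM]
        exact le_iSup (fun p : {p : ℝ × ℝ // l1 ≤ p.1 ∧ p.1 < p.2 ∧ p.2 ≤ l2} =>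
          ENNReal.ofReal (‖Λ' p.1.1 p.1.2‖ / (p.1.2 - p.1.1) ^ μ))
          (⟨(a, b), ⟨r1, hab, r2⟩⟩ : {p : ℝ × ℝ // l1 ≤ p.1 ∧ p.1 < p.2 ∧ p.2 ≤ l2})
      have h1' : ‖Λ' a b‖ / (b-a)^μ ≤ M.toReal := by
        rw [← ENNReal.ofReal_le_iff_le_toReal hMne]
        exact hsupM
      have h2' : ‖Λ' a b‖ ≤ M.toReal * (b-a)^μ := by
        rw [div_le_iff₀ hpow] at h1'
        linarith
      have h3' := hbound a b r1 hab.le r2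
      calc ‖g a b‖ ≤ ‖Λ' a b‖ + ‖lamSum h a b‖ := by
            simp only [hgdef]; exact norm_sub_le _ _
        _ ≤ M.toReal * (b-a)^μ + c*(K*(b-a)^μ) := add_le_add h2' h3'
        _ = (M.toReal + c*K)*(b-a)^μ := by ring
    have hC0 : (0:ℝ) ≤ M.toReal + c*K := by positivity
    have hz := vanish_of_holder hgadd hμ hC0 hgdiag hgb s t h1 h2 h3
    have e : Λ' s t = lamSum h s t := by
      have : Λ' s t - lamSum h s t = 0 := by simpa [hgdef] using hz
      exact sub_eq_zero.1 this
    rw [e, hL s t h1 h2 h3]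
  exact ⟨hsew, hnorm, huniq⟩

end
end

section
/- Integration of small increments (Corollary 2.2): Let V be a Banach space, ℓ₁ < ℓ₂, and μ > 1. Let g : {(s,t) : ℓ₁ ≤ s ≤ t ≤ ℓ₂} → V be continuous, vanishing on the diagonal, such that ‖δg‖_μ < ∞, where (δg)_{sut} := g_{st} − g_{su} − g_{ut}. Then there exists a function f : [ℓ₁,ℓ₂] → V such that for all ℓ₁ ≤ s ≤ t ≤ ℓ₂: (i) ‖f_t − f_s − g_{st}‖ ≤ c_μ ‖δg‖_μ (t−s)^μ for a constant c_μ depending only on μ, and (ii) f_t − f_s = lim Σ_{i=0}^{N−1} g_{t_i t_{i+1}}, the limit being taken over partitions {s = t_0 < t_1 < ⋯ < t_N = t} of [s,t] whose mesh tends to zero. -/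
open Set
open scoped ENNReal

noncomputable section

variable {V : Type*} [NormedAddCommGroup V]

/-- The coboundary `δg` of a 1-increment `g`: `(δg)_{sut} = g_{st} - g_{su} - g_{ut}`. -/
def deltaInc (g : ℝ → ℝ → V) : ℝ → ℝ → ℝ → V :=
  fun s u t => g s t - g s u - g u t


noncomputable section
namespace SewingAux

variable {V : Type*} [NormedAddCommGroup V]

def IsPart (π : ℕ → ℝ) (N : ℕ) (s t : ℝ) : Prop :=
  π 0 = s ∧ π N = t ∧ ∀ i < N, π i < π (i + 1)

def pSum (g : ℝ → ℝ → V) (π : ℕ → ℝ) (N : ℕ) : V :=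
  ∑ i ∈ Finset.range N, g (π i) (π (i + 1))


/-- generic monotonicity from step-wise strict increase -/
lemma part_mono {α : Type*} [Preorder α] {p : ℕ → α} {N : ℕ}
    (hp : ∀ i < N, p i < p (i + 1)) {i j : ℕ} (hij : i ≤ j) (hj : j ≤ N) :
    p i ≤ p j := by
  induction j with
  | zero => simp_all
  | succ n ih =>
    rcases Nat.lt_or_ge i (n+1) with h | h
    · exact le_trans (ih (Nat.lt_succ_iff.mp h) (le_trans (Nat.le_succ n) hj))
        (le_of_lt (hp n (Nat.lt_of_succ_le hj)))
    · have : i = n + 1 := le_antisymm hij h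
      simp [this]

lemma IsPart.mono {π : ℕ → ℝ} {N : ℕ} {s t : ℝ} (h : IsPart π N s t)
    {i j : ℕ} (hij : i ≤ j) (hj : j ≤ N) : π i ≤ π j :=
  part_mono h.2.2 hij hj

lemma IsPart.le {π : ℕ → ℝ} {N : ℕ} {s t : ℝ} (h : IsPart π N s t) : s ≤ t := by
  have := h.mono (Nat.zero_le N) le_rfl
  rw [h.1, h.2.1] at this; exact this

lemma IsPart.mem_left {π : ℕ → ℝ} {N : ℕ} {s t : ℝ} (h : IsPart π N s t)
    {i : ℕ} (hi : i ≤ N) : s ≤ π i := by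
  have := h.mono (Nat.zero_le i) hi; rwa [h.1] at this

lemma IsPart.mem_right {π : ℕ → ℝ} {N : ℕ} {s t : ℝ} (h : IsPart π N s t)
    {i : ℕ} (hi : i ≤ N) : π i ≤ t := by
  have := h.mono hi le_rfl; rwa [h.2.1] at this

/-- removing the interior point `k+1` from a partition with `M+2` intervals -/
lemma remove_sum (g : ℝ → ℝ → V) (π : ℕ → ℝ) (M k : ℕ) (hk : k ≤ M) :
    pSum g π (M + 2) =
      pSum g (fun j => if j ≤ k then π j else π (j + 1)) (M + 1)
        - deltaInc g (π k) (π (k + 1)) (π (k + 2)) := by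
  unfold pSum deltaInc
  have h1 : ∀ n, Finset.range n = Finset.Ico 0 n := fun n => by rw [Finset.range_eq_Ico]
  rw [h1 (M+2), h1 (M+1),
    ← Finset.sum_Ico_consecutive _ (Nat.zero_le k) (by omega : k ≤ M + 2),
    ← Finset.sum_Ico_consecutive _ (by omega : (k:ℕ) ≤ k + 2) (by omega : k + 2 ≤ M + 2),
    ← Finset.sum_Ico_consecutive _ (Nat.zero_le k) (by omega : k ≤ M + 1),
    ← Finset.sum_Ico_consecutive _ (by omega : (k:ℕ) ≤ k + 1) (by omega : k + 1 ≤ M + 1)]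
  have e1 : ∑ i ∈ Finset.Ico 0 k, g ((fun j => if j ≤ k then π j else π (j+1)) i)
      ((fun j => if j ≤ k then π j else π (j+1)) (i+1))
      = ∑ i ∈ Finset.Ico 0 k, g (π i) (π (i+1)) := by
    apply Finset.sum_congr rfl
    intro i hi
    simp only [Finset.mem_Ico] at hi
    simp only [if_pos (by omega : i ≤ k), if_pos (by omega : i + 1 ≤ k)]
  have e2 : ∑ i ∈ Finset.Ico k (k+1), g ((fun j => if j ≤ k then π j else π (j+1)) i)
      ((fun j => if j ≤ k then π j else π (j+1)) (i+1))
      = g (π k) (π (k+2)) := by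
    rw [Finset.sum_Ico_eq_sum_range]
    simp
  have e3 : ∑ i ∈ Finset.Ico k (k+2), g (π i) (π (i+1))
      = g (π k) (π (k+1)) + g (π (k+1)) (π (k+2)) := by
    rw [Finset.sum_Ico_eq_sum_range]
    simp [Finset.sum_range_succ]
  have e4 : ∑ i ∈ Finset.Ico (k+1) (M+1), g ((fun j => if j ≤ k then π j else π (j+1)) i)
      ((fun j => if j ≤ k then π j else π (j+1)) (i+1))
      = ∑ i ∈ Finset.Ico (k+2) (M+2), g (π i) (π (i+1)) := by
    rw [Finset.sum_Ico_eq_sum_range, Finset.sum_Ico_eq_sum_range]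
    have : M + 1 - (k + 1) = M + 2 - (k + 2) := by omega
    rw [this]
    apply Finset.sum_congr rfl
    intro i _
    simp only [if_neg (by omega : ¬ k + 1 + i ≤ k), if_neg (by omega : ¬ k + 1 + i + 1 ≤ k)]
    congr 2 <;> omega
  rw [e1, e2, e3, e4]
  abel

/-- existence of a point whose removal is cheap -/
lemma exists_small {π : ℕ → ℝ} {N : ℕ} {s t : ℝ} (h : IsPart π (N + 2) s t) :
    ∃ k ≤ N, π (k + 2) - π k ≤ 2 * (t - s) / (N + 1) := by
  by_contra hcon
  push_neg at hcon
  have hsum : ∑ k ∈ Finset.range (N + 1), (π (k + 2) - π k)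
      = (π (N + 2) - π 1) + (π (N + 1) - π 0) := by
    have : ∀ k, π (k + 2) - π k = (π (k + 2) - π (k + 1)) + (π (k + 1) - π k) := by
      intro k; ring
    simp_rw [this]
    rw [Finset.sum_add_distrib, Finset.sum_range_sub (fun k => π (k + 1)),
      Finset.sum_range_sub (fun k => π k)]
  have hlt : ∀ k ∈ Finset.range (N + 1), 2 * (t - s) / (N + 1) < π (k + 2) - π k := by
    intro k hk
    exact hcon k (by simpa using Nat.lt_succ_iff.mp (Finset.mem_range.mp hk))
  have hcard : (Finset.range (N+1)).Nonempty := ⟨0, by simp⟩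
  have := Finset.sum_lt_sum_of_nonempty hcard hlt
  rw [Finset.sum_const, Finset.card_range, hsum] at this
  have h1 : s ≤ π 1 := h.mem_left (by omega)
  have h2 : π (N + 1) ≤ t := h.mem_right (by omega)
  have hN2 : π (N + 2) = t := h.2.1
  have h0 : π 0 = s := h.1
  have hsmul : ((N + 1 : ℕ) : ℝ) * (2 * (t - s) / (N + 1)) = 2 * (t - s) := by
    have : ((N:ℝ) + 1) ≠ 0 := by positivity
    push_cast
    field_simp
  rw [nsmul_eq_mul, hsmul, hN2, h0] at this
  nlinarith


section Core
variable {V : Type*} [NormedAddCommGroup V]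
variable {g : ℝ → ℝ → V} {l1 l2 μ A : ℝ}

/-- Young's maximal inequality, exact constants. -/
lemma psum_bound (hμ : 1 < μ) (hA0 : 0 ≤ A)
    (hg0 : ∀ x, l1 ≤ x → x ≤ l2 → g x x = 0)
    (hA : ∀ s u t : ℝ, l1 ≤ s → s ≤ u → u ≤ t → t ≤ l2 →
      ‖deltaInc g s u t‖ ≤ A * (t - s) ^ μ) :
    ∀ N (π : ℕ → ℝ) (s t : ℝ), IsPart π N s t → l1 ≤ s → t ≤ l2 →
      ‖pSum g π N - g s t‖
        ≤ A * (∑ k ∈ Finset.range (N - 1), (2 / (k + 1) : ℝ) ^ μ) * (t - s) ^ μ := by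
  intro N
  induction N using Nat.strong_induction_on with
  | _ N ih =>
    match N with
    | 0 => intro π s t hp hs ht
           have hst : s = t := by rw [← hp.1, ← hp.2.1]
           subst hst
           simp [pSum, hg0 s hs ht]
    | 1 => intro π s t hp hs ht
           simp [pSum, Finset.sum_range_one, hp.1, ← hp.2.1]
    | (M + 2) => intro π s t hp hs ht
                 obtain ⟨k, hk, hsmall⟩ := exists_small hp
                 set π' : ℕ → ℝ := fun j => if j ≤ k then π j else π (j + 1) with hπ'
                 have hp' : IsPart π' (M + 1) s t := by
                   refine ⟨by simp [hπ', hp.1], ?_, ?_⟩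
                   · simp only [hπ', if_neg (by omega : ¬ M + 1 ≤ k)]
                     exact hp.2.1
                   · intro i hi
                     by_cases h1 : i + 1 ≤ k
                     · simp only [hπ', if_pos (by omega : i ≤ k), if_pos h1]
                       exact hp.2.2 i (by omega)
                     · by_cases h2 : i ≤ k
                       · have hik : i = k := by omega
                         subst hik
                         simp only [hπ', if_pos le_rfl, if_neg h1]
                         exact lt_trans (hp.2.2 i (by omega)) (hp.2.2 (i+1) (by omega))
                       · simp only [hπ', if_neg h2, if_neg (by omega : ¬ i + 1 ≤ k)]
                         exact hp.2.2 (i+1) (by omega)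
                 have hrec := ih (M + 1) (by omega) π' s t hp' hs ht
                 have hrem := remove_sum g π M k hk
                 have hts : 0 ≤ t - s := by linarith [hp.le]
                 have hdel : ‖deltaInc g (π k) (π (k+1)) (π (k+2))‖
                     ≤ A * ((2 / (M + 1) : ℝ)) ^ μ * (t - s) ^ μ := by
                   have hb := hA (π k) (π (k+1)) (π (k+2))
                     (le_trans hs (hp.mem_left (by omega)))
                     (le_of_lt (hp.2.2 k (by omega)))
                     (le_of_lt (hp.2.2 (k+1) (by omega)))
                     (le_trans (hp.mem_right (by omega)) ht)
                   have hnn : (0:ℝ) ≤ π (k+2) - π k := by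
                     have := hp.mono (by omega : k ≤ k + 2) (by omega)
                     linarith
                   have h1 : (π (k+2) - π k) ^ μ ≤ (2 * (t - s) / (M + 1)) ^ μ :=
                     Real.rpow_le_rpow hnn hsmall (by linarith)
                   have h2 : (2 * (t - s) / (M + 1) : ℝ) = (2 / (M+1)) * (t - s) := by ring
                   have h3 : (2 * (t - s) / (M + 1) : ℝ) ^ μ = (2 / (M+1) : ℝ) ^ μ * (t-s) ^ μ := by
                     rw [h2, Real.mul_rpow (by positivity) hts]
                   calc ‖deltaInc g (π k) (π (k+1)) (π (k+2))‖ ≤ A * (π (k+2) - π k) ^ μ := hb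
                     _ ≤ A * ((2 / (M+1) : ℝ) ^ μ * (t-s) ^ μ) := by
                         rw [← h3]; exact mul_le_mul_of_nonneg_left (h3 ▸ h1) hA0
                     _ = A * ((2 / (M + 1) : ℝ)) ^ μ * (t - s) ^ μ := by ring
                 have key : ‖pSum g π (M+2) - g s t‖
                     ≤ ‖pSum g π' (M+1) - g s t‖ + ‖deltaInc g (π k) (π (k+1)) (π (k+2))‖ := by
                   rw [hrem]
                   have : pSum g π' (M+1) - deltaInc g (π k) (π (k+1)) (π (k+2)) - g s t
                       = (pSum g π' (M+1) - g s t) + (- deltaInc g (π k) (π (k+1)) (π (k+2))) := by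
                     abel
                   rw [this]
                   exact le_trans (norm_add_le _ _) (by rw [norm_neg])
                 have hsum : (∑ x ∈ Finset.range (M + 2 - 1), (2 / (x + 1) : ℝ) ^ μ)
                     = (∑ x ∈ Finset.range (M + 1 - 1), (2 / (x + 1) : ℝ) ^ μ) + (2 / (M + 1) : ℝ) ^ μ := by
                   have h1 : M + 2 - 1 = (M + 1 - 1) + 1 := by omega
                   rw [h1, Finset.sum_range_succ]
                   norm_num
                 calc ‖pSum g π (M+2) - g s t‖
                     ≤ ‖pSum g π' (M+1) - g s t‖ + ‖deltaInc g (π k) (π (k+1)) (π (k+2))‖ := key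
                   _ ≤ A * (∑ x ∈ Finset.range (M + 1 - 1), (2 / (x + 1) : ℝ) ^ μ) * (t-s) ^ μ
                       + A * ((2 / (M + 1) : ℝ)) ^ μ * (t - s) ^ μ := add_le_add hrec hdel
                   _ = A * (∑ x ∈ Finset.range (M + 2 - 1), (2 / (x + 1) : ℝ) ^ μ) * (t-s) ^ μ := by
                       rw [hsum]; ring

/-- the sewing constant -/
def sewT (μ : ℝ) : ℝ := ∑' k : ℕ, (1 / ((k : ℝ) + 1)) ^ μ

lemma summable_aux (hμ : 1 < μ) : Summable (fun k : ℕ => (1 / ((k : ℝ) + 1)) ^ μ) := by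
  have h := (Real.summable_one_div_nat_rpow (p := μ)).2 hμ
  have h2 := h.comp_injective Nat.succ_injective
  apply h2.congr
  intro k
  simp only [Function.comp_apply, Nat.succ_eq_add_one]
  push_cast
  rw [Real.div_rpow (by norm_num) (by positivity), Real.one_rpow]

lemma sewT_pos (hμ : 1 < μ) : 0 < sewT μ := by
  have h := summable_aux hμ
  have h0 : (1 / ((0 : ℕ) + 1 : ℝ)) ^ μ ≤ sewT μ := Summable.le_tsum h 0 (fun i _ => by positivity)
  norm_num at h0
  linarith [h0]

lemma partial_le_sewT (hμ : 1 < μ) (n : ℕ) :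
    (∑ k ∈ Finset.range n, (2 / (k + 1) : ℝ) ^ μ) ≤ 2 ^ μ * sewT μ := by
  have he : ∀ k : ℕ, (2 / (k + 1) : ℝ) ^ μ = 2 ^ μ * (1 / ((k:ℝ) + 1)) ^ μ := by
    intro k
    rw [← Real.mul_rpow (by norm_num) (by positivity)]
    congr 1
    ring
  simp_rw [he, ← Finset.mul_sum]
  have h2 : (0:ℝ) ≤ 2 ^ μ := by positivity
  exact mul_le_mul_of_nonneg_left
    (Summable.sum_le_tsum _ (fun i _ => by positivity) (summable_aux hμ)) h2

variable {V : Type*} [NormedAddCommGroup V]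
variable {g : ℝ → ℝ → V} {l1 l2 μ A : ℝ}

/-- maximal inequality with uniform constant -/
lemma psum_bound' (hμ : 1 < μ) (hA0 : 0 ≤ A)
    (hg0 : ∀ x, l1 ≤ x → x ≤ l2 → g x x = 0)
    (hA : ∀ s u t : ℝ, l1 ≤ s → s ≤ u → u ≤ t → t ≤ l2 →
      ‖deltaInc g s u t‖ ≤ A * (t - s) ^ μ)
    {N : ℕ} {π : ℕ → ℝ} {s t : ℝ} (hp : IsPart π N s t) (hs : l1 ≤ s) (ht : t ≤ l2) :
    ‖pSum g π N - g s t‖ ≤ A * (2 ^ μ * sewT μ) * (t - s) ^ μ := by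
  refine le_trans (psum_bound hμ hA0 hg0 hA N π s t hp hs ht) ?_
  have hts : (0:ℝ) ≤ t - s := by linarith [hp.le]
  have hx : (0:ℝ) ≤ (t - s) ^ μ := Real.rpow_nonneg hts μ
  exact mul_le_mul_of_nonneg_right
    (mul_le_mul_of_nonneg_left (partial_le_sewT hμ _) hA0) hx

/-- grouping a sum along a monotone index map -/
lemma sum_grouped (a : ℕ → V) (φ : ℕ → ℕ) (h0 : φ 0 = 0) :
    ∀ N : ℕ, (∀ j < N, φ j ≤ φ (j + 1)) →
      ∑ k ∈ Finset.range (φ N), a k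
        = ∑ j ∈ Finset.range N, ∑ k ∈ Finset.Ico (φ j) (φ (j + 1)), a k := by
  intro N
  induction N with
  | zero => simp [h0]
  | succ n ih =>
    intro hm
    rw [Finset.sum_range_succ, ← ih (fun j hj => hm j (by omega)),
      Finset.range_eq_Ico,
      ← Finset.sum_Ico_consecutive a (Nat.zero_le (φ n)) (hm n (by omega)),
      ← Finset.range_eq_Ico]


/-- refinement estimate: a refinement differs from the coarse sum by the sewing bound
on each coarse interval. -/
lemma refine_bound (hμ : 1 < μ) (hA0 : 0 ≤ A)
    (hg0 : ∀ x, l1 ≤ x → x ≤ l2 → g x x = 0)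
    (hA : ∀ s u t : ℝ, l1 ≤ s → s ≤ u → u ≤ t → t ≤ l2 →
      ‖deltaInc g s u t‖ ≤ A * (t - s) ^ μ)
    {N M : ℕ} {τ σ : ℕ → ℝ} {φ : ℕ → ℕ} {s t : ℝ}
    (hτ : IsPart τ M s t) (hσ : IsPart σ N s t) (hs : l1 ≤ s) (ht : t ≤ l2)
    (hφ0 : φ 0 = 0) (hφN : φ N = M) (hφm : ∀ j < N, φ j < φ (j + 1))
    (hφτ : ∀ j ≤ N, τ (φ j) = σ j) :
    ‖pSum g τ M - pSum g σ N‖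
      ≤ A * (2 ^ μ * sewT μ) * ∑ j ∈ Finset.range N, (σ (j + 1) - σ j) ^ μ := by
  have hmono : ∀ {i j : ℕ}, i ≤ j → j ≤ N → φ i ≤ φ j := fun hij hj => part_mono hφm hij hj
  have hgrp : pSum g τ M = ∑ j ∈ Finset.range N,
      ∑ k ∈ Finset.Ico (φ j) (φ (j + 1)), g (τ k) (τ (k + 1)) := by
    rw [pSum, ← hφN]
    exact sum_grouped _ φ hφ0 N (fun j hj => le_of_lt (hφm j hj))
  have hdiff : pSum g τ M - pSum g σ N = ∑ j ∈ Finset.range N,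
      ((∑ k ∈ Finset.Ico (φ j) (φ (j + 1)), g (τ k) (τ (k + 1))) - g (σ j) (σ (j + 1))) := by
    rw [hgrp, pSum, ← Finset.sum_sub_distrib]
  rw [hdiff]
  refine le_trans (norm_sum_le _ _) ?_
  rw [Finset.mul_sum]
  apply Finset.sum_le_sum
  intro j hj
  rw [Finset.mem_range] at hj
  -- the inner partition of [σ j, σ (j+1)]
  set π : ℕ → ℝ := fun i => τ (φ j + i) with hπ
  have hle1 : φ (j + 1) ≤ M := by rw [← hφN]; exact hmono (by omega) le_rfl
  have hone : φ j ≤ φ (j + 1) := le_of_lt (hφm j hj)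
  have hpart : IsPart π (φ (j + 1) - φ j) (σ j) (σ (j + 1)) := by
    refine ⟨?_, ?_, ?_⟩
    · simp only [hπ, Nat.add_zero]; exact hφτ j (by omega)
    · simp only [hπ]
      rw [Nat.add_sub_cancel' hone]
      exact hφτ (j + 1) (by omega)
    · intro i hi
      exact hτ.2.2 (φ j + i) (by omega)
  have hinner : ∑ k ∈ Finset.Ico (φ j) (φ (j + 1)), g (τ k) (τ (k + 1))
      = pSum g π (φ (j + 1) - φ j) := by
    rw [pSum, Finset.sum_Ico_eq_sum_range]
    apply Finset.sum_congr rfl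
    intro i _
    simp [hπ, Nat.add_assoc]
  rw [hinner]
  exact psum_bound' hμ hA0 hg0 hA hpart
    (le_trans hs (hσ.mem_left (by omega))) (le_trans (hσ.mem_right (by omega)) ht)

/-- mesh version -/
lemma refine_bound_mesh (hμ : 1 < μ) (hA0 : 0 ≤ A)
    (hg0 : ∀ x, l1 ≤ x → x ≤ l2 → g x x = 0)
    (hA : ∀ s u t : ℝ, l1 ≤ s → s ≤ u → u ≤ t → t ≤ l2 →
      ‖deltaInc g s u t‖ ≤ A * (t - s) ^ μ)
    {N M : ℕ} {τ σ : ℕ → ℝ} {φ : ℕ → ℕ} {s t δ : ℝ}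
    (hτ : IsPart τ M s t) (hσ : IsPart σ N s t) (hs : l1 ≤ s) (ht : t ≤ l2)
    (hφ0 : φ 0 = 0) (hφN : φ N = M) (hφm : ∀ j < N, φ j < φ (j + 1))
    (hφτ : ∀ j ≤ N, τ (φ j) = σ j)
    (hδ : 0 ≤ δ) (hmesh : ∀ i < N, σ (i + 1) - σ i ≤ δ) :
    ‖pSum g τ M - pSum g σ N‖
      ≤ A * (2 ^ μ * sewT μ) * (δ ^ (μ - 1) * (t - s)) := by
  refine le_trans (refine_bound hμ hA0 hg0 hA hτ hσ hs ht hφ0 hφN hφm hφτ) ?_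
  have hAK : (0:ℝ) ≤ A * (2 ^ μ * sewT μ) := by
    have := sewT_pos hμ
    positivity
  apply mul_le_mul_of_nonneg_left _ hAK
  have hterm : ∀ j ∈ Finset.range N, (σ (j + 1) - σ j) ^ μ ≤ δ ^ (μ - 1) * (σ (j + 1) - σ j) := by
    intro j hj
    rw [Finset.mem_range] at hj
    have hpos : 0 < σ (j + 1) - σ j := by linarith [hσ.2.2 j hj]
    have h1 := Real.rpow_add hpos (μ - 1) 1
    rw [Real.rpow_one, sub_add_cancel] at h1
    rw [h1]
    apply mul_le_mul_of_nonneg_right _ (le_of_lt hpos)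
    exact Real.rpow_le_rpow (le_of_lt hpos) (hmesh j hj) (by linarith)
  refine le_trans (Finset.sum_le_sum hterm) ?_
  rw [← Finset.mul_sum]
  have htel : ∑ j ∈ Finset.range N, (σ (j + 1) - σ j) = t - s := by
    rw [Finset.sum_range_sub (fun j => σ j), hσ.1, hσ.2.1]
  rw [htel]


/-- common refinement of two partitions -/
lemma exists_common_refinement {σ1 σ2 : ℕ → ℝ} {N1 N2 : ℕ} {s t : ℝ}
    (h1 : IsPart σ1 N1 s t) (h2 : IsPart σ2 N2 s t) :
    ∃ (τ : ℕ → ℝ) (M : ℕ) (φ1 φ2 : ℕ → ℕ),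
      IsPart τ M s t ∧
      (φ1 0 = 0 ∧ φ1 N1 = M ∧ (∀ j < N1, φ1 j < φ1 (j + 1)) ∧ ∀ j ≤ N1, τ (φ1 j) = σ1 j) ∧
      (φ2 0 = 0 ∧ φ2 N2 = M ∧ (∀ j < N2, φ2 j < φ2 (j + 1)) ∧ ∀ j ≤ N2, τ (φ2 j) = σ2 j) := by
  classical
  set E : Finset ℝ :=
    (Finset.range (N1 + 1)).image σ1 ∪ (Finset.range (N2 + 1)).image σ2 with hE
  have hsmem : s ∈ E := by
    apply Finset.mem_union_left
    exact Finset.mem_image.mpr ⟨0, Finset.mem_range.mpr (by omega), h1.1⟩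
  have htmem : t ∈ E := by
    apply Finset.mem_union_left
    exact Finset.mem_image.mpr ⟨N1, Finset.mem_range.mpr (by omega), h1.2.1⟩
  have hlow : ∀ x ∈ E, s ≤ x := by
    intro x hx
    rcases Finset.mem_union.mp hx with hx | hx <;>
    · obtain ⟨j, hj, rfl⟩ := Finset.mem_image.mp hx
      rw [Finset.mem_range] at hj
      first
      | exact h1.mem_left (by omega)
      | exact h2.mem_left (by omega)
  have hhigh : ∀ x ∈ E, x ≤ t := by
    intro x hx
    rcases Finset.mem_union.mp hx with hx | hx <;>
    · obtain ⟨j, hj, rfl⟩ := Finset.mem_image.mp hx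
      rw [Finset.mem_range] at hj
      first
      | exact h1.mem_right (by omega)
      | exact h2.mem_right (by omega)
  set n := E.card with hn
  have hn0 : 0 < n := Finset.card_pos.mpr ⟨s, hsmem⟩
  set e := E.orderIsoOfFin (rfl : E.card = n) with he
  set τ : ℕ → ℝ := fun k => if h : k < n then (e ⟨k, h⟩ : ℝ) else t with hτ
  set M := n - 1 with hM
  have hMn : M < n := by omega
  -- index of an element of E
  have hidx : ∀ x (hx : x ∈ E), ∃ i : Fin n, e i = ⟨x, hx⟩ :=
    fun x hx => ⟨e.symm ⟨x, hx⟩, e.apply_symm_apply _⟩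
  -- τ strictly increasing below n
  have hτmono : ∀ i j : ℕ, i < j → j < n → τ i < τ j := by
    intro i j hij hj
    have hi : i < n := lt_trans hij hj
    simp only [hτ, dif_pos hi, dif_pos hj]
    exact_mod_cast e.strictMono (show (⟨i, hi⟩ : Fin n) < ⟨j, hj⟩ from hij)
  -- τ 0 = s
  have hτ0 : τ 0 = s := by
    have h0n : 0 < n := hn0
    have hle1 : s ≤ (e ⟨0, h0n⟩ : ℝ) := hlow _ (e ⟨0, h0n⟩).2
    obtain ⟨i, hi⟩ := hidx s hsmem
    have : (e ⟨0, h0n⟩ : ℝ) ≤ (e i : ℝ) := by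
      have : (⟨0, h0n⟩ : Fin n) ≤ i := Fin.mk_le_of_le_val (Nat.zero_le _)
      exact_mod_cast e.monotone this
    rw [hi] at this
    simp only [hτ, dif_pos h0n]
    exact le_antisymm this hle1
  -- τ M = t
  have hτM : τ M = t := by
    have hle1 : (e ⟨M, hMn⟩ : ℝ) ≤ t := hhigh _ (e ⟨M, hMn⟩).2
    obtain ⟨i, hi⟩ := hidx t htmem
    have : (e i : ℝ) ≤ (e ⟨M, hMn⟩ : ℝ) := by
      have hi2 := i.2
      have : i ≤ (⟨M, hMn⟩ : Fin n) := by
        rw [Fin.le_def]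
        simp only []
        omega
      exact_mod_cast e.monotone this
    rw [hi] at this
    simp only [hτ, dif_pos hMn]
    exact le_antisymm hle1 this
  -- index map for a partition whose points lie in E
  have hphi : ∀ (σ : ℕ → ℝ) (N : ℕ), IsPart σ N s t →
      (∀ j ≤ N, σ j ∈ E) →
      ∃ φ : ℕ → ℕ, φ 0 = 0 ∧ φ N = M ∧ (∀ j < N, φ j < φ (j + 1)) ∧
        ∀ j ≤ N, τ (φ j) = σ j := by
    intro σ N hσ hmem
    set φ : ℕ → ℕ := fun j => if h : σ j ∈ E then (e.symm ⟨σ j, h⟩ : Fin n).val else 0 with hφ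
    have hτφ : ∀ j ≤ N, τ (φ j) = σ j := by
      intro j hj
      have hj' := hmem j hj
      simp only [hφ, dif_pos hj']
      have hlt : ((e.symm ⟨σ j, hj'⟩ : Fin n) : ℕ) < n := (e.symm ⟨σ j, hj'⟩).2
      simp only [hτ, dif_pos hlt]
      have : e ⟨(e.symm ⟨σ j, hj'⟩ : Fin n).val, hlt⟩ = e (e.symm ⟨σ j, hj'⟩) := by
        congr 1
      rw [this, e.apply_symm_apply]
    refine ⟨φ, ?_, ?_, ?_, hτφ⟩
    · -- φ 0 = 0
      have h0 : τ (φ 0) = σ 0 := hτφ 0 (Nat.zero_le N)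
      rw [hσ.1, ← hτ0] at h0
      by_contra hne
      have hlt : φ 0 < n := by
        simp only [hφ]
        split
        · exact (e.symm _).2
        · omega
      rcases Nat.lt_or_ge 0 (φ 0) with hc | hc
      · exact absurd h0 (ne_of_gt (hτmono 0 (φ 0) hc hlt))
      · omega
    · -- φ N = M
      have h0 : τ (φ N) = σ N := hτφ N le_rfl
      rw [hσ.2.1, ← hτM] at h0
      have hlt : φ N < n := by
        simp only [hφ]
        split
        · exact (e.symm _).2
        · omega
      rcases lt_trichotomy (φ N) M with hc | hc | hc
      · exact absurd h0 (ne_of_lt (hτmono (φ N) M hc hMn))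
      · exact hc
      · exact absurd h0 (ne_of_gt (hτmono M (φ N) hc hlt))
    · -- strictly increasing
      intro j hj
      have hj1 := hmem j (by omega)
      have hj2 := hmem (j + 1) (by omega)
      simp only [hφ, dif_pos hj1, dif_pos hj2]
      have hlt : σ j < σ (j + 1) := hσ.2.2 j hj
      have : (⟨σ j, hj1⟩ : {x // x ∈ E}) < ⟨σ (j + 1), hj2⟩ := by
        exact_mod_cast hlt
      exact e.symm.strictMono this
  have hPart : IsPart τ M s t := ⟨hτ0, hτM, fun i hi => hτmono i (i + 1) (by omega) (by omega)⟩
  obtain ⟨φ1, hφ1⟩ := hphi σ1 N1 h1 (fun j hj => Finset.mem_union_left _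
    (Finset.mem_image.mpr ⟨j, Finset.mem_range.mpr (by omega), rfl⟩))
  obtain ⟨φ2, hφ2⟩ := hphi σ2 N2 h2 (fun j hj => Finset.mem_union_right _
    (Finset.mem_image.mpr ⟨j, Finset.mem_range.mpr (by omega), rfl⟩))
  exact ⟨τ, M, φ1, φ2, hPart, hφ1, hφ2⟩


/-- comparison of two arbitrary partitions of the same interval -/
lemma compare_partitions (hμ : 1 < μ) (hA0 : 0 ≤ A)
    (hg0 : ∀ x, l1 ≤ x → x ≤ l2 → g x x = 0)
    (hA : ∀ s u t : ℝ, l1 ≤ s → s ≤ u → u ≤ t → t ≤ l2 →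
      ‖deltaInc g s u t‖ ≤ A * (t - s) ^ μ)
    {N1 N2 : ℕ} {σ1 σ2 : ℕ → ℝ} {s t δ1 δ2 : ℝ}
    (h1 : IsPart σ1 N1 s t) (h2 : IsPart σ2 N2 s t) (hs : l1 ≤ s) (ht : t ≤ l2)
    (hδ1 : 0 ≤ δ1) (hδ2 : 0 ≤ δ2)
    (hm1 : ∀ i < N1, σ1 (i + 1) - σ1 i ≤ δ1) (hm2 : ∀ i < N2, σ2 (i + 1) - σ2 i ≤ δ2) :
    ‖pSum g σ1 N1 - pSum g σ2 N2‖
      ≤ A * (2 ^ μ * sewT μ) * ((δ1 ^ (μ - 1) + δ2 ^ (μ - 1)) * (t - s)) := by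
  obtain ⟨τ, M, φ1, φ2, hτ, ⟨ha1, ha2, ha3, ha4⟩, ⟨hb1, hb2, hb3, hb4⟩⟩ :=
    exists_common_refinement h1 h2
  have e1 := refine_bound_mesh hμ hA0 hg0 hA hτ h1 hs ht ha1 ha2 ha3 ha4 hδ1 hm1
  have e2 := refine_bound_mesh hμ hA0 hg0 hA hτ h2 hs ht hb1 hb2 hb3 hb4 hδ2 hm2
  calc ‖pSum g σ1 N1 - pSum g σ2 N2‖
      ≤ ‖pSum g τ M - pSum g σ1 N1‖ + ‖pSum g τ M - pSum g σ2 N2‖ := by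
        have : pSum g σ1 N1 - pSum g σ2 N2
            = -(pSum g τ M - pSum g σ1 N1) + (pSum g τ M - pSum g σ2 N2) := by abel
        rw [this]
        exact le_trans (norm_add_le _ _) (by rw [norm_neg])
    _ ≤ A * (2 ^ μ * sewT μ) * (δ1 ^ (μ - 1) * (t - s))
        + A * (2 ^ μ * sewT μ) * (δ2 ^ (μ - 1) * (t - s)) := add_le_add e1 e2
    _ = A * (2 ^ μ * sewT μ) * ((δ1 ^ (μ - 1) + δ2 ^ (μ - 1)) * (t - s)) := by ring

/-- concatenation of partitions -/
lemma concat_part {π1 π2 : ℕ → ℝ} {N1 N2 : ℕ} {a u b : ℝ}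
    (h1 : IsPart π1 N1 a u) (h2 : IsPart π2 N2 u b) :
    IsPart (fun k => if k ≤ N1 then π1 k else π2 (k - N1)) (N1 + N2) a b ∧
    pSum g (fun k => if k ≤ N1 then π1 k else π2 (k - N1)) (N1 + N2)
      = pSum g π1 N1 + pSum g π2 N2 ∧
    (∀ δ, (∀ i < N1, π1 (i + 1) - π1 i ≤ δ) → (∀ i < N2, π2 (i + 1) - π2 i ≤ δ) →
      ∀ i < N1 + N2, (fun k => if k ≤ N1 then π1 k else π2 (k - N1)) (i + 1)
        - (fun k => if k ≤ N1 then π1 k else π2 (k - N1)) i ≤ δ) := by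
  set c : ℕ → ℝ := fun k => if k ≤ N1 then π1 k else π2 (k - N1) with hc
  have hval : ∀ k, N1 ≤ k → k ≤ N1 + N2 → c k = π2 (k - N1) := by
    intro k hk1 hk2
    by_cases h : k ≤ N1
    · have : k = N1 := le_antisymm h hk1
      subst this
      simp only [hc, if_pos le_rfl, Nat.sub_self, h1.2.1, h2.1]
    · simp only [hc, if_neg h]
  have hpart : IsPart c (N1 + N2) a b := by
    refine ⟨by simp [hc, h1.1], ?_, ?_⟩
    · rw [hval (N1 + N2) (by omega) le_rfl, Nat.add_sub_cancel_left, h2.2.1]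
    · intro i hi
      by_cases hi1 : i + 1 ≤ N1
      · simp only [hc, if_pos (by omega : i ≤ N1), if_pos hi1]
        exact h1.2.2 i (by omega)
      · have e1 : c i = π2 (i - N1) := hval i (by omega) (by omega)
        have e2 : c (i + 1) = π2 (i + 1 - N1) := hval (i + 1) (by omega) (by omega)
        rw [e1, e2]
        have : i + 1 - N1 = (i - N1) + 1 := by omega
        rw [this]
        exact h2.2.2 (i - N1) (by omega)
  refine ⟨hpart, ?_, ?_⟩
  · unfold pSum
    rw [Finset.range_eq_Ico, ← Finset.sum_Ico_consecutive _ (Nat.zero_le N1) (by omega : N1 ≤ N1 + N2),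
      ← Finset.range_eq_Ico]
    congr 1
    · apply Finset.sum_congr rfl
      intro i hi
      rw [Finset.mem_range] at hi
      simp only [hc, if_pos (by omega : i ≤ N1), if_pos (by omega : i + 1 ≤ N1)]
    · rw [Finset.sum_Ico_eq_sum_range, Nat.add_sub_cancel_left]
      apply Finset.sum_congr rfl
      intro i hi
      rw [Finset.mem_range] at hi
      have e1 : c (N1 + i) = π2 i := by
        rw [hval (N1 + i) (by omega) (by omega), Nat.add_sub_cancel_left]
      have e2 : c (N1 + i + 1) = π2 (i + 1) := by
        rw [hval (N1 + i + 1) (by omega) (by omega)]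
        congr 1
        omega
      rw [e1, e2]
  · intro δ hd1 hd2 i hi
    by_cases hi1 : i + 1 ≤ N1
    · simp only [hc, if_pos (by omega : i ≤ N1), if_pos hi1]
      exact hd1 i (by omega)
    · have e1 : c i = π2 (i - N1) := hval i (by omega) (by omega)
      have e2 : c (i + 1) = π2 (i + 1 - N1) := hval (i + 1) (by omega) (by omega)
      show c (i+1) - c i ≤ δ
      rw [e1, e2]
      have : i + 1 - N1 = (i - N1) + 1 := by omega
      rw [this]
      exact hd2 (i - N1) (by omega)

/-- the uniform partition -/
def unif (s t : ℝ) (n : ℕ) : ℕ → ℝ := fun k => s + k * ((t - s) / (n + 1))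

lemma unif_isPart {s t : ℝ} (hst : s < t) (n : ℕ) : IsPart (unif s t n) (n + 1) s t := by
  have hpos : (0:ℝ) < (t - s) / (n + 1) := by
    apply div_pos (by linarith)
    positivity
  refine ⟨by simp [unif], ?_, ?_⟩
  · simp only [unif]
    push_cast
    field_simp
    ring
  · intro i _
    simp only [unif]
    push_cast
    nlinarith [hpos]

lemma unif_mesh {s t : ℝ} (hst : s < t) (n : ℕ) :
    ∀ i < n + 1, unif s t n (i + 1) - unif s t n i ≤ (t - s) / (n + 1) := by
  intro i _
  have : unif s t n (i + 1) - unif s t n i = (t - s) / (n + 1) := by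
    simp only [unif]
    push_cast
    ring
  rw [this]


lemma exists_pointwise_bound {V : Type*} [NormedAddCommGroup V] [NormedSpace ℝ V]
    [CompleteSpace V] {l1 l2 μ : ℝ} (hμ : 1 < μ)
    {h : ℝ → ℝ → ℝ → V} (hfin : muNorm l1 l2 μ h < ⊤) {ε : ℝ} (hε : 0 < ε) :
    ∃ A : ℝ, 0 ≤ A ∧ A ≤ (muNorm l1 l2 μ h).toReal + ε ∧
      ∀ s u t : ℝ, l1 ≤ s → s ≤ u → u ≤ t → t ≤ l2 →
        ‖h s u t‖ ≤ A * (t - s) ^ μ := by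
  have hne : muNorm l1 l2 μ h ≠ ⊤ := hfin.ne
  have hlt : muNorm l1 l2 μ h < muNorm l1 l2 μ h + ENNReal.ofReal ε :=
    ENNReal.lt_add_right hne (ENNReal.ofReal_pos.mpr hε).ne'
  conv_lhs at hlt => rw [muNorm]
  simp only [iInf_lt_iff] at hlt
  obtain ⟨hs, ρ, hinc, hρ, hsum, hlt'⟩ := hlt
  set S := ∑' i, twoIncNorm l1 l2 (ρ i) (μ - ρ i) (hs i) with hS
  have hSne : S ≠ ⊤ := by
    refine (lt_of_le_of_lt hlt'.le ?_).ne
    exact ENNReal.add_lt_top.mpr ⟨hfin, ENNReal.ofReal_lt_top⟩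
  have hich : ∀ i, twoIncNorm l1 l2 (ρ i) (μ - ρ i) (hs i) ≠ ⊤ :=
    fun i => (lt_of_le_of_lt (ENNReal.le_tsum i) hSne.lt_top).ne
  refine ⟨S.toReal, ENNReal.toReal_nonneg, ?_, ?_⟩
  · have := ENNReal.toReal_mono (by finiteness) hlt'.le
    rwa [ENNReal.toReal_add hne ENNReal.ofReal_ne_top, ENNReal.toReal_ofReal hε.le] at this
  · intro s u t hls hsu hut htl
    have hst : (0:ℝ) ≤ t - s := by linarith
    have hX : (0:ℝ) ≤ (t - s) ^ μ := Real.rpow_nonneg hst μ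
    have hper : ∀ i, ‖hs i s u t‖
        ≤ (twoIncNorm l1 l2 (ρ i) (μ - ρ i) (hs i)).toReal * (t - s) ^ μ := by
      intro i
      rcases eq_or_lt_of_le hsu with hequ | hltu
      · rw [(hinc i).2 s u t hls hsu hut htl (Or.inl hequ), norm_zero]
        positivity
      rcases eq_or_lt_of_le hut with heqt | hltt
      · rw [(hinc i).2 s u t hls hsu hut htl (Or.inr heqt), norm_zero]
        positivity
      · set D := (u - s) ^ (ρ i) * (t - u) ^ (μ - ρ i) with hD
        have hDpos : 0 < D := by
          apply mul_pos <;> exact Real.rpow_pos_of_pos (by linarith) _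
        have hsup : ENNReal.ofReal (‖hs i s u t‖ / D)
            ≤ twoIncNorm l1 l2 (ρ i) (μ - ρ i) (hs i) := by
          rw [twoIncNorm]
          exact le_iSup (fun p : {p : ℝ × ℝ × ℝ //
              l1 ≤ p.1 ∧ p.1 ≤ p.2.1 ∧ p.2.1 ≤ p.2.2 ∧ p.2.2 ≤ l2} =>
            ENNReal.ofReal (‖hs i p.1.1 p.1.2.1 p.1.2.2‖ /
              ((p.1.2.1 - p.1.1) ^ (ρ i) * (p.1.2.2 - p.1.2.1) ^ (μ - ρ i))))
            ⟨(s, u, t), hls, hsu, hut, htl⟩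
        have hdiv : ‖hs i s u t‖ / D
            ≤ (twoIncNorm l1 l2 (ρ i) (μ - ρ i) (hs i)).toReal :=
          (ENNReal.ofReal_le_iff_le_toReal (hich i)).mp hsup
        have h1 : ‖hs i s u t‖
            ≤ (twoIncNorm l1 l2 (ρ i) (μ - ρ i) (hs i)).toReal * D :=
          (div_le_iff₀ hDpos).mp hdiv
        refine le_trans h1 (mul_le_mul_of_nonneg_left ?_ ENNReal.toReal_nonneg)
        have hd1 : (u - s) ^ (ρ i) ≤ (t - s) ^ (ρ i) :=
          Real.rpow_le_rpow (by linarith) (by linarith) (hρ i).1.le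
        have hd2 : (t - u) ^ (μ - ρ i) ≤ (t - s) ^ (μ - ρ i) :=
          Real.rpow_le_rpow (by linarith) (by linarith) (by linarith [(hρ i).2])
        have := mul_le_mul hd1 hd2 (Real.rpow_nonneg (by linarith) _)
          (Real.rpow_nonneg (by linarith) _)
        refine le_trans this (le_of_eq ?_)
        rw [← Real.rpow_add (by linarith : (0:ℝ) < t - s)]
        ring_nf
    have hsummA : Summable (fun i =>
        (twoIncNorm l1 l2 (ρ i) (μ - ρ i) (hs i)).toReal) :=
      ENNReal.summable_toReal hSne
    have hsummB : Summable (fun i =>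
        (twoIncNorm l1 l2 (ρ i) (μ - ρ i) (hs i)).toReal * (t - s) ^ μ) :=
      hsummA.mul_right _
    have hsummN : Summable (fun i => ‖hs i s u t‖) :=
      Summable.of_nonneg_of_le (fun i => norm_nonneg _) hper hsummB
    have heq : h s u t = ∑' i, hs i s u t := (hsum s u t hls hsu hut htl).tsum_eq.symm
    calc ‖h s u t‖ = ‖∑' i, hs i s u t‖ := by rw [heq]
      _ ≤ ∑' i, ‖hs i s u t‖ := norm_tsum_le_tsum_norm hsummN
      _ ≤ ∑' i, (twoIncNorm l1 l2 (ρ i) (μ - ρ i) (hs i)).toReal * (t - s) ^ μ :=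
          Summable.tsum_le_tsum hper hsummN hsummB
      _ = (∑' i, (twoIncNorm l1 l2 (ρ i) (μ - ρ i) (hs i)).toReal) * (t - s) ^ μ :=
          tsum_mul_right
      _ = S.toReal * (t - s) ^ μ := by rw [hS, ENNReal.tsum_toReal_eq hich]

end Core
end SewingAux

open SewingAux Filter Topology in
/-- **Integration of small increments.** For `μ > 1` there is a constant `c_μ`, depending only
on `μ`, such that: for every Banach space `V`, every interval `[l1, l2]` and every continuous
1-increment `g` on the simplex vanishing on the diagonal with `‖δg‖_μ < ∞`, there is a function
`f : [l1, l2] → V` with `‖f_t - f_s - g_{st}‖ ≤ c_μ ‖δg‖_μ (t-s)^μ`, and `f_t - f_s` is the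
limit of the Riemann sums `∑ g_{tᵢ t_{i+1}}` along partitions of `[s,t]` with mesh tending
to zero. -/
theorem integration_of_small_increments (μ : ℝ) (hμ : 1 < μ) :
    ∃ c : ℝ, 0 < c ∧
      ∀ (V : Type) (_i1 : NormedAddCommGroup V) (_i2 : NormedSpace ℝ V)
        (_i3 : CompleteSpace V),
      ∀ (l1 l2 : ℝ), l1 < l2 →
      ∀ g : ℝ → ℝ → V,
        ContinuousOn (fun p : ℝ × ℝ => g p.1 p.2)
          {p : ℝ × ℝ | l1 ≤ p.1 ∧ p.1 ≤ p.2 ∧ p.2 ≤ l2} →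
        (∀ t : ℝ, l1 ≤ t → t ≤ l2 → g t t = 0) →
        muNorm l1 l2 μ (deltaInc g) < ⊤ →
        ∃ f : ℝ → V,
          (∀ s t : ℝ, l1 ≤ s → s ≤ t → t ≤ l2 →
            ‖f t - f s - g s t‖ ≤ c * (muNorm l1 l2 μ (deltaInc g)).toReal * (t - s) ^ μ) ∧
          (∀ s t : ℝ, l1 ≤ s → s ≤ t → t ≤ l2 →
            ∀ ε : ℝ, 0 < ε → ∃ δ : ℝ, 0 < δ ∧
              ∀ (N : ℕ) (π : ℕ → ℝ), π 0 = s → π N = t →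
                (∀ i < N, π i < π (i + 1)) → (∀ i < N, π (i + 1) - π i ≤ δ) →
                ‖f t - f s - ∑ i ∈ Finset.range N, g (π i) (π (i + 1))‖ ≤ ε) := by
  classical
  set K : ℝ := 2 ^ μ * sewT μ with hK
  have hKpos : 0 < K := by
    have := sewT_pos hμ
    positivity
  refine ⟨K, hKpos, ?_⟩
  intro V _i1 _i2 _i3 l1 l2 hl g _hcont hdiag hfin
  set Mu : ℝ := (muNorm l1 l2 μ (deltaInc g)).toReal with hMu
  -- a fixed pointwise bound
  obtain ⟨A₀, hA₀0, hA₀le, hA₀⟩ := exists_pointwise_bound hμ hfin one_pos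
  -- decaying mesh sequence
  have hmesh_dec : ∀ a b : ℝ, a < b → ∀ N n : ℕ, N ≤ n →
      ((b - a) / (n + 1) : ℝ) ≤ (b - a) / (N + 1) := by
    intro a b hab N n hNn
    have hcast : (N:ℝ) + 1 ≤ (n:ℝ) + 1 := by
      have : (N:ℝ) ≤ n := by exact_mod_cast hNn
      linarith
    exact div_le_div_of_nonneg_left (by linarith) (by positivity) hcast
  have hrtend : ∀ a b : ℝ, a < b →
      Tendsto (fun n : ℕ => ((b - a) / (n + 1)) ^ (μ - 1)) atTop (𝓝 0) := by
    intro a b hab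
    have t1 : Tendsto (fun n : ℕ => (b - a) / (n + 1)) atTop (𝓝 0) := by
      have := (tendsto_const_div_atTop_nhds_zero_nat (b - a)).comp
        (tendsto_add_atTop_nat 1)
      apply this.congr
      intro n
      simp only [Function.comp_apply]
      push_cast
      ring
    have hc : ContinuousAt (fun x : ℝ => x ^ (μ - 1)) 0 :=
      Real.continuousAt_rpow_const 0 (μ - 1) (Or.inr (by linarith))
    have := hc.tendsto.comp t1
    rwa [Real.zero_rpow (by linarith : μ - 1 ≠ 0)] at this
  -- existence of the limit of uniform Riemann sums
  have key : ∀ a b : ℝ, l1 ≤ a → a < b → b ≤ l2 →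
      ∃ L : V, Tendsto (fun n => pSum g (unif a b n) (n + 1)) atTop (𝓝 L) := by
    intro a b ha hab hb
    apply cauchySeq_tendsto_of_complete
    apply cauchySeq_of_le_tendsto_0
      (b := fun N : ℕ => A₀ * K * ((2 * ((b - a) / (N + 1)) ^ (μ - 1)) * (b - a)))
    · intro n m N hn hm
      rw [dist_eq_norm]
      have hba : (0:ℝ) < b - a := by linarith
      have h1 := compare_partitions hμ hA₀0 hdiag hA₀ (unif_isPart hab n) (unif_isPart hab m)
        ha hb (by positivity) (by positivity) (unif_mesh hab n) (unif_mesh hab m)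
      refine le_trans h1 ?_
      have hr1 : ((b - a) / (n + 1) : ℝ) ^ (μ - 1) ≤ ((b - a) / (N + 1)) ^ (μ - 1) :=
        Real.rpow_le_rpow (by positivity) (hmesh_dec a b hab N n hn) (by linarith)
      have hr2 : ((b - a) / (m + 1) : ℝ) ^ (μ - 1) ≤ ((b - a) / (N + 1)) ^ (μ - 1) :=
        Real.rpow_le_rpow (by positivity) (hmesh_dec a b hab N m hm) (by linarith)
      have hAK : (0:ℝ) ≤ A₀ * K := by positivity
      apply mul_le_mul_of_nonneg_left _ hAK
      apply mul_le_mul_of_nonneg_right _ (by linarith : (0:ℝ) ≤ b - a)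
      linarith
    · have := ((hrtend a b hab).const_mul 2).mul_const (b - a)
      have h2 := this.const_mul (A₀ * K)
      simpa using h2
  set Lam : ℝ → ℝ → V := fun a b =>
    if h : l1 ≤ a ∧ a < b ∧ b ≤ l2 then (key a b h.1 h.2.1 h.2.2).choose else 0 with hLamdef
  have hLam : ∀ a b : ℝ, l1 ≤ a → a < b → b ≤ l2 →
      Tendsto (fun n => pSum g (unif a b n) (n + 1)) atTop (𝓝 (Lam a b)) := by
    intro a b ha hab hb
    have h : l1 ≤ a ∧ a < b ∧ b ≤ l2 := ⟨ha, hab, hb⟩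
    simp only [hLamdef, dif_pos h]
    exact (key a b h.1 h.2.1 h.2.2).choose_spec
  -- P1 : any partition with small mesh is close to Lam
  have P1 : ∀ A : ℝ, 0 ≤ A →
      (∀ s u t : ℝ, l1 ≤ s → s ≤ u → u ≤ t → t ≤ l2 →
        ‖deltaInc g s u t‖ ≤ A * (t - s) ^ μ) →
      ∀ a b : ℝ, l1 ≤ a → a < b → b ≤ l2 → ∀ δ : ℝ, 0 ≤ δ →
      ∀ (N : ℕ) (σ : ℕ → ℝ), IsPart σ N a b → (∀ i < N, σ (i + 1) - σ i ≤ δ) →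
      ‖pSum g σ N - Lam a b‖ ≤ A * K * (δ ^ (μ - 1) * (b - a)) := by
    intro A hA0 hA a b ha hab hb δ hδ N σ hσ hm
    have hseq : ∀ n : ℕ, ‖pSum g σ N - pSum g (unif a b n) (n + 1)‖
        ≤ A * K * ((δ ^ (μ - 1) + ((b - a) / (n + 1)) ^ (μ - 1)) * (b - a)) := by
      intro n
      have hba : (0:ℝ) < b - a := by linarith
      exact compare_partitions hμ hA0 hdiag hA hσ (unif_isPart hab n)
        ha hb hδ (by positivity) hm (unif_mesh hab n)
    have hT1 : Tendsto (fun n : ℕ => ‖pSum g σ N - pSum g (unif a b n) (n + 1)‖)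
        atTop (𝓝 ‖pSum g σ N - Lam a b‖) :=
      ((hLam a b ha hab hb).const_sub (pSum g σ N)).norm
    have hT2 : Tendsto (fun n : ℕ =>
        A * K * ((δ ^ (μ - 1) + ((b - a) / (n + 1)) ^ (μ - 1)) * (b - a)))
        atTop (𝓝 (A * K * (δ ^ (μ - 1) * (b - a)))) := by
      have := (((hrtend a b hab).const_add (δ ^ (μ - 1))).mul_const (b - a)).const_mul (A * K)
      simpa using this
    exact le_of_tendsto_of_tendsto hT1 hT2 (Filter.Eventually.of_forall hseq)
  -- P2 : Lam is close to g
  have P2 : ∀ A : ℝ, 0 ≤ A →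
      (∀ s u t : ℝ, l1 ≤ s → s ≤ u → u ≤ t → t ≤ l2 →
        ‖deltaInc g s u t‖ ≤ A * (t - s) ^ μ) →
      ∀ a b : ℝ, l1 ≤ a → a < b → b ≤ l2 →
      ‖Lam a b - g a b‖ ≤ A * K * (b - a) ^ μ := by
    intro A hA0 hA a b ha hab hb
    have hT : Tendsto (fun n : ℕ => ‖pSum g (unif a b n) (n + 1) - g a b‖)
        atTop (𝓝 ‖Lam a b - g a b‖) :=
      ((hLam a b ha hab hb).sub_const (g a b)).norm
    refine le_of_tendsto hT (Filter.Eventually.of_forall fun n => ?_)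
    exact psum_bound' hμ hA0 hdiag hA (unif_isPart hab n) ha hb
  -- P3 : additivity
  have P3 : ∀ a u b : ℝ, l1 ≤ a → a < u → u < b → b ≤ l2 →
      Lam a u + Lam u b = Lam a b := by
    intro a u b ha hau hub hb
    have hab : a < b := lt_trans hau hub
    have hu1 : l1 ≤ u := le_trans ha hau.le
    have hu2 : u ≤ l2 := le_trans hub.le hb
    have hcomb : ∀ n : ℕ, IsPart (fun k => if k ≤ n + 1 then unif a u n k
          else unif u b n (k - (n + 1))) ((n + 1) + (n + 1)) a b ∧
        pSum g (fun k => if k ≤ n + 1 then unif a u n k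
          else unif u b n (k - (n + 1))) ((n + 1) + (n + 1))
          = pSum g (unif a u n) (n + 1) + pSum g (unif u b n) (n + 1) ∧
        (∀ i < (n + 1) + (n + 1), (fun k => if k ≤ n + 1 then unif a u n k
          else unif u b n (k - (n + 1))) (i + 1)
          - (fun k => if k ≤ n + 1 then unif a u n k
          else unif u b n (k - (n + 1))) i ≤ (b - a) / (n + 1)) := by
      intro n
      obtain ⟨hp, hsum, hm⟩ := concat_part (g := g) (unif_isPart hau n) (unif_isPart hub n)
      refine ⟨hp, hsum, hm ((b - a) / (n + 1)) ?_ ?_⟩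
      · intro i hi
        refine le_trans (unif_mesh hau n i hi) ?_
        exact (div_le_div_iff_of_pos_right (by positivity)).mpr (by linarith)
      · intro i hi
        refine le_trans (unif_mesh hub n i hi) ?_
        exact (div_le_div_iff_of_pos_right (by positivity)).mpr (by linarith)
    -- the concatenated sums tend both to Lam a u + Lam u b and to Lam a b
    have hT1 : Tendsto (fun n : ℕ => pSum g (unif a u n) (n + 1)
        + pSum g (unif u b n) (n + 1)) atTop (𝓝 (Lam a u + Lam u b)) :=
      (hLam a u ha hau hu2).add (hLam u b hu1 hub hb)
    have hT2 : Tendsto (fun n : ℕ => pSum g (unif a u n) (n + 1)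
        + pSum g (unif u b n) (n + 1)) atTop (𝓝 (Lam a b)) := by
      rw [← tendsto_sub_nhds_zero_iff]
      apply squeeze_zero_norm (a := fun n : ℕ =>
        A₀ * K * (((b - a) / (n + 1)) ^ (μ - 1) * (b - a)))
      · intro n
        obtain ⟨hp, hsum, hm⟩ := hcomb n
        rw [← hsum]
        exact P1 A₀ hA₀0 hA₀ a b ha hab hb ((b - a) / (n + 1))
          (by have hba : (0:ℝ) < b - a := by linarith
              positivity) _ _ hp hm
      · have := ((hrtend a b hab).mul_const (b - a)).const_mul (A₀ * K)
        simpa using this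
    exact tendsto_nhds_unique hT1 hT2
  -- Lam l1 l1 = 0
  have hLam0 : Lam l1 l1 = 0 := by
    simp only [hLamdef]
    rw [dif_neg]
    rintro ⟨-, h, -⟩
    exact lt_irrefl _ h
  -- increments of f
  have hincr : ∀ s t : ℝ, l1 ≤ s → s < t → t ≤ l2 → Lam l1 t - Lam l1 s = Lam s t := by
    intro s t hs hst ht
    rcases eq_or_lt_of_le hs with heq | hlt
    · rw [← heq, hLam0, sub_zero]
    · rw [← P3 l1 s t le_rfl hlt hst ht]
      abel
  refine ⟨fun x => Lam l1 x, ?_, ?_⟩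
  · -- part (i)
    intro s t hs hst ht
    rcases eq_or_lt_of_le hst with heq | hlt
    · subst heq
      rw [sub_self, zero_sub, norm_neg, hdiag s hs ht, norm_zero, sub_self,
        Real.zero_rpow (by linarith : μ ≠ 0), mul_zero]
    · rw [hincr s t hs hlt ht]
      have hX : (0:ℝ) < (t - s) ^ μ := Real.rpow_pos_of_pos (by linarith) μ
      have hgoal : ∀ ε' : ℝ, 0 < ε' →
          ‖Lam s t - g s t‖ ≤ K * Mu * (t - s) ^ μ + ε' := by
        intro ε' hε'
        have hKX : 0 < K * (t - s) ^ μ := by positivity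
        obtain ⟨A, hA0, hAle, hApt⟩ := exists_pointwise_bound hμ hfin
          (div_pos hε' hKX)
        have h2 := P2 A hA0 hApt s t hs hlt ht
        refine le_trans h2 ?_
        have : A * K * (t - s) ^ μ ≤ (Mu + ε' / (K * (t - s) ^ μ)) * K * (t - s) ^ μ := by
          apply mul_le_mul_of_nonneg_right _ hX.le
          exact mul_le_mul_of_nonneg_right hAle hKpos.le
        refine le_trans this (le_of_eq ?_)
        field_simp
      have := le_of_forall_pos_le_add hgoal
      linarith [this]
  · -- part (ii)
    intro s t hs hst ht ε hε
    rcases eq_or_lt_of_le hst with heq | hlt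
    · subst heq
      refine ⟨1, one_pos, ?_⟩
      intro N π h0 hN hmono hmesh
      have hN0 : N = 0 := by
        by_contra hc
        have h1 : π 0 < π 1 := hmono 0 (by omega)
        have h2 : π 1 ≤ π N := part_mono hmono (by omega) le_rfl
        rw [h0, hN] at *
        linarith [h1, h2]
      subst hN0
      simp [sub_self]
      exact hε.le
    · have hba : (0:ℝ) < t - s := by linarith
      set B : ℝ := K * (A₀ + 1) * (t - s) with hB
      have hBpos : 0 < B := by positivity
      set δ : ℝ := (ε / B) ^ (μ - 1)⁻¹ with hδdef
      have hδpos : 0 < δ := Real.rpow_pos_of_pos (div_pos hε hBpos) _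
      refine ⟨δ, hδpos, ?_⟩
      intro N π h0 hN hmono hmesh
      have hp : IsPart π N s t := ⟨h0, hN, hmono⟩
      rw [hincr s t hs hlt ht]
      rw [norm_sub_rev]
      have h1 := P1 A₀ hA₀0 hA₀ s t hs hlt ht δ hδpos.le N π hp hmesh
      refine le_trans h1 ?_
      have hδμ : δ ^ (μ - 1) = ε / B :=
        Real.rpow_inv_rpow (le_of_lt (div_pos hε hBpos)) (by linarith : μ - 1 ≠ 0)
      rw [hδμ]
      have : A₀ * K * (ε / B * (t - s)) ≤ (A₀ + 1) * K * (ε / B * (t - s)) := by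
        apply mul_le_mul_of_nonneg_right _ (by positivity)
        apply mul_le_mul_of_nonneg_right _ hKpos.le
        linarith
      refine le_trans this (le_of_eq ?_)
      rw [hB]
      field_simp

end
end
end

section
/- Garsia–Rodemich–Rumsey inequality in Hölder form (Lemma 3.3/GRR-1): For every γ > 0, every p ≥ 1 and every l ∈ ℕ there exists a constant C_{γ,p,l} > 0 such that for every T > 0 and every continuous function f : [0,T] → ℝ^l one has sup_{0≤s<t≤T} |f(t) − f(s)|/(t−s)^γ ≤ C_{γ,p,l} ( ∫₀^T ∫₀^T |f(u) − f(v)|^{2p} / |u−v|^{2γp+2} du dv )^{1/(2p)}. -/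
open Set MeasureTheory
open scoped ENNReal

open Filter
open scoped Topology

noncomputable section

/-- Chebyshev-type selection: find a point where two functionals are small. -/
lemma grr_select {A : Set ℝ} (hA : MeasurableSet A) (h0 : volume A ≠ 0) (ht : volume A ≠ ∞)
    {φ ψ : ℝ → ℝ≥0∞} (hφ : Measurable φ) (hψ : Measurable ψ)
    {P Q : ℝ≥0∞} (hPt : P ≠ ∞) (hQt : Q ≠ ∞)
    (hP : ∫⁻ x in A, φ x ≤ P) (hQ : ∫⁻ x in A, ψ x ≤ Q) :
    ∃ x ∈ A, φ x ≤ 4 * P / volume A ∧ ψ x ≤ 4 * Q / volume A := by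
  set m := volume A with hm
  have key : ∀ (χ : ℝ → ℝ≥0∞), Measurable χ → ∀ (R : ℝ≥0∞), R ≠ ∞ → (∫⁻ x in A, χ x) ≤ R →
      volume {x | x ∈ A ∧ 4 * R / m < χ x} ≤ m / 4 := by
    intro χ hχ R hRt hR
    rcases eq_or_ne R 0 with rfl | hR0
    · have hz : ∫⁻ x in A, χ x = 0 := le_antisymm (by simpa using hR) bot_le
      rw [lintegral_eq_zero_iff hχ] at hz
      have hnull : volume ({x | ¬ χ x = 0} ∩ A) = 0 := by
        rw [Filter.EventuallyEq, ae_iff, Measure.restrict_apply₀] at hz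
        · simpa using hz
        · exact (hχ (measurableSet_singleton 0)).compl.nullMeasurableSet
      refine le_trans (le_trans (measure_mono ?_) hnull.le) bot_le
      rintro x ⟨hxA, hx⟩
      refine ⟨fun h => ?_, hxA⟩
      rw [h] at hx
      simp at hx
    · set ε : ℝ≥0∞ := 4 * R / m with hε
      have h4R0 : (4 : ℝ≥0∞) * R ≠ 0 := by
        simp only [ne_eq, mul_eq_zero]; push_neg; exact ⟨by norm_num, hR0⟩
      have h4Rt : (4 : ℝ≥0∞) * R ≠ ∞ := ENNReal.mul_ne_top (by norm_num) hRt
      have hε0 : ε ≠ 0 := by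
        simp only [hε, ne_eq, ENNReal.div_eq_zero_iff]
        push_neg; exact ⟨h4R0, ht⟩
      have hεt : ε ≠ ∞ := by
        rw [hε, ne_eq, ENNReal.div_eq_top]
        rintro (⟨-, hm0⟩ | ⟨h4, -⟩)
        · exact h0 hm0
        · exact h4Rt h4
      have hcheb := mul_meas_ge_le_lintegral₀ (μ := volume.restrict A) hχ.aemeasurable ε
      have hsub : volume {x | x ∈ A ∧ ε < χ x} ≤ (volume.restrict A) {x | ε ≤ χ x} := by
        rw [Measure.restrict_apply₀' hA.nullMeasurableSet]
        exact measure_mono fun x hx => ⟨le_of_lt hx.2, hx.1⟩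
      have h1 : ε * volume {x | x ∈ A ∧ ε < χ x} ≤ R :=
        le_trans (mul_le_mul_right hsub ε) (le_trans hcheb hR)
      by_contra hcon
      push_neg at hcon
      have h3 : ε * (m / 4) = R := by
        rw [hε, mul_comm, mul_div_assoc, ← mul_assoc,
          ENNReal.div_mul_cancel (by norm_num) (by norm_num), ENNReal.mul_div_cancel h0 ht]
      have h4 : ε * (m / 4) < ε * volume {x | x ∈ A ∧ ε < χ x} :=
        ENNReal.mul_lt_mul_right hε0 hεt hcon
      exact absurd (lt_of_lt_of_le (h3 ▸ h4) h1) (lt_irrefl R)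
  have hS1 := key φ hφ P hPt hP
  have hS2 := key ψ hψ Q hQt hQ
  by_contra hcon
  push_neg at hcon
  have hAsub : A ⊆ {x | x ∈ A ∧ 4 * P / m < φ x} ∪ {x | x ∈ A ∧ 4 * Q / m < ψ x} := by
    intro x hx
    by_cases h1 : φ x ≤ 4 * P / m
    · exact Or.inr ⟨hx, hcon x hx h1⟩
    · exact Or.inl ⟨hx, not_le.mp h1⟩
  have hmle : m ≤ m / 4 + m / 4 :=
    le_trans (measure_mono hAsub) (le_trans (measure_union_le _ _) (add_le_add hS1 hS2))
  have hhalf : m / 4 + m / 4 = m / 2 := by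
    rw [ENNReal.div_add_div_same, ← two_mul, show (4 : ℝ≥0∞) = 2 * 2 by norm_num,
      ENNReal.mul_div_mul_left _ _ (by norm_num) (by norm_num)]
  rw [hhalf] at hmle
  exact absurd (lt_of_le_of_lt hmle (ENNReal.half_lt_self h0 ht)) (lt_irrefl m)

variable {E : Type*} [NormedAddCommGroup E]

/-- The GRR kernel. -/
noncomputable def grrKer (f : ℝ → E) (q a : ℝ) (u v : ℝ) : ℝ≥0∞ :=
  ENNReal.ofReal (‖f u - f v‖ ^ q / |u - v| ^ a)

lemma measurable_grrKer {f : ℝ → E} (hf : Continuous f) {q a : ℝ} (hq : 0 ≤ q) (ha : 0 ≤ a) :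
    Measurable (Function.uncurry (grrKer f q a)) := by
  apply ENNReal.measurable_ofReal.comp
  apply Measurable.div
  · exact ((Real.continuous_rpow_const hq).comp
      (((hf.comp continuous_fst).sub (hf.comp continuous_snd)).norm)).measurable
  · exact ((Real.continuous_rpow_const ha).comp
      ((continuous_fst.sub continuous_snd).abs)).measurable

lemma measurable_grrI {f : ℝ → E} (hf : Continuous f) {q a : ℝ} (hq : 0 ≤ q) (ha : 0 ≤ a)
    (s t : ℝ) : Measurable fun x => ∫⁻ v in Icc s t, grrKer f q a x v :=
  Measurable.lintegral_prod_right (measurable_grrKer hf hq ha)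

lemma pow_rpow_comm' {x : ℝ} (hx : 0 ≤ x) (n : ℕ) (a : ℝ) : (x ^ n) ^ a = (x ^ a) ^ n := by
  rw [← Real.rpow_natCast x n, ← Real.rpow_mul hx, mul_comm, Real.rpow_mul hx,
    Real.rpow_natCast]

section Chain

variable {f : ℝ → E} {q a s t e x₀ b : ℝ} {c : ℕ → ℝ}

/-- The chaining step of the GRR proof. -/
lemma grr_chain (hf : Continuous f) (hq : 0 < q) (ha : 2 < a)
    (hst : s < t) (hb : 0 ≤ b)
    (hB : ∫⁻ u in Icc s t, ∫⁻ v in Icc s t, grrKer f q a u v ≤ ENNReal.ofReal b)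
    (hc0 : c 0 = s)
    (hcsub : ∀ n, s ≤ c n ∧ c n + (t - s) * (2:ℝ)⁻¹ ^ n ≤ t)
    (hcnest : ∀ n, Icc (c (n+1)) (c (n+1) + (t - s) * (2:ℝ)⁻¹ ^ (n+1)) ⊆
      Icc (c n) (c n + (t - s) * (2:ℝ)⁻¹ ^ n))
    (he : ∀ n, e ∈ Icc (c n) (c n + (t - s) * (2:ℝ)⁻¹ ^ n))
    (hx₀ : x₀ ∈ Icc s t)
    (hIx₀ : ∫⁻ v in Icc s t, grrKer f q a x₀ v ≤ ENNReal.ofReal (4 * b / (t - s))) :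
    ‖f x₀ - f e‖ ≤ (32 * b * (t - s) ^ (a - 2)) ^ q⁻¹ *
      (1 - ((2:ℝ) ^ (2 - a)) ^ q⁻¹)⁻¹ := by
  set D := t - s with hD
  have hD0 : 0 < D := sub_pos.mpr hst
  have hq0 : (0:ℝ) ≤ q := hq.le
  have ha0 : (0:ℝ) ≤ a := by linarith
  have hkerm := measurable_grrKer hf hq0 ha0
  set I : ℝ → ℝ≥0∞ := fun x => ∫⁻ v in Icc s t, grrKer f q a x v with hI
  have hIm : Measurable I := measurable_grrI hf hq0 ha0 s t
  set A : ℕ → Set ℝ := fun n => Icc (c n) (c n + D * (2:ℝ)⁻¹ ^ n) with hA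
  have hlen_pos : ∀ n : ℕ, (0:ℝ) < D * (2:ℝ)⁻¹ ^ n :=
    fun n => mul_pos hD0 (pow_pos (by norm_num) n)
  have hAsub : ∀ n, A n ⊆ Icc s t :=
    fun n => Icc_subset_Icc (hcsub n).1 (hcsub n).2
  have hvolA : ∀ n, volume (A n) = ENNReal.ofReal (D * (2:ℝ)⁻¹ ^ n) := by
    intro n; rw [hA]; simp [Real.volume_Icc]
  set Good : ℕ → ℝ → Prop :=
    fun n x => x ∈ A n ∧ I x ≤ ENNReal.ofReal (4 * 2 ^ n * b / D) with hGood
  have hA0 : A 0 = Icc s t := by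
    rw [hA]; simp [hc0, hD]
  have hGood0 : Good 0 x₀ := by
    refine ⟨by rw [hA0]; exact hx₀, ?_⟩
    simpa using hIx₀
  -- the inductive step
  have step : ∀ n x, Good n x → ∃ y, Good (n+1) y ∧
      grrKer f q a x y ≤ ENNReal.ofReal (32 * 4 ^ n * b / (D * D)) := by
    intro n x hx
    have hvol := hvolA (n+1)
    have hlp := hlen_pos (n+1)
    have h1 : ∫⁻ z in A (n+1), I z ≤ ENNReal.ofReal b :=
      le_trans (lintegral_mono_set (hAsub (n+1))) hB
    have h2 : ∫⁻ z in A (n+1), grrKer f q a x z ≤ ENNReal.ofReal (4 * 2 ^ n * b / D) :=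
      le_trans (lintegral_mono_set (hAsub (n+1))) hx.2
    obtain ⟨y, hyA, hyI, hyK⟩ := grr_select measurableSet_Icc
      (by rw [hvol]; exact (ENNReal.ofReal_pos.mpr hlp).ne')
      (by rw [hvol]; exact ENNReal.ofReal_ne_top)
      hIm (hkerm.comp (measurable_const.prodMk measurable_id))
      ENNReal.ofReal_ne_top ENNReal.ofReal_ne_top h1 h2
    have hcast1 : (4:ℝ≥0∞) * ENNReal.ofReal b / volume (A (n+1))
        = ENNReal.ofReal (4 * b / (D * (2:ℝ)⁻¹ ^ (n+1))) := by
      rw [hvol, ← ENNReal.ofReal_ofNat 4, ← ENNReal.ofReal_mul (by norm_num),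
        ← ENNReal.ofReal_div_of_pos hlp]
    have hcast2 : (4:ℝ≥0∞) * ENNReal.ofReal (4 * 2 ^ n * b / D) / volume (A (n+1))
        = ENNReal.ofReal (4 * (4 * 2 ^ n * b / D) / (D * (2:ℝ)⁻¹ ^ (n+1))) := by
      rw [hvol, ← ENNReal.ofReal_ofNat 4, ← ENNReal.ofReal_mul (by norm_num),
        ← ENNReal.ofReal_div_of_pos hlp]
    have hr1 : 4 * b / (D * (2:ℝ)⁻¹ ^ (n+1)) = 4 * 2 ^ (n+1) * b / D := by
      rw [inv_pow]
      have h2n : ((2:ℝ) ^ (n+1)) ≠ 0 := (pow_pos two_pos _).ne'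
      field_simp
    have hr2 : 4 * (4 * 2 ^ n * b / D) / (D * (2:ℝ)⁻¹ ^ (n+1)) = 32 * 4 ^ n * b / (D * D) := by
      rw [inv_pow, show (4:ℝ) ^ n = 2 ^ n * 2 ^ n by rw [← mul_pow]; norm_num]
      have h2n : ((2:ℝ) ^ (n+1)) ≠ 0 := (pow_pos two_pos _).ne'
      field_simp
      ring
    refine ⟨y, ⟨hyA, ?_⟩, ?_⟩
    · exact le_trans hyI (le_of_eq (by rw [hcast1, hr1]))
    · exact le_trans hyK (le_of_eq (by rw [hcast2, hr2]))
  -- construct the sequence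
  choose! F hFg hFk using step
  set u : ℕ → ℝ := fun n => Nat.rec x₀ (fun k xk => F k xk) n with hu
  have hu0 : u 0 = x₀ := rfl
  have husucc : ∀ n, u (n+1) = F n (u n) := fun n => rfl
  have hugood : ∀ n, Good n (u n) := by
    intro n
    induction n with
    | zero => exact hGood0
    | succ k ih => rw [husucc]; exact hFg k (u k) ih
  have huker : ∀ n, grrKer f q a (u n) (u (n+1)) ≤
      ENNReal.ofReal (32 * 4 ^ n * b / (D * D)) := by
    intro n
    rw [husucc]
    exact hFk n (u n) (hugood n)
  -- per-step distance bound
  set K : ℝ := (32 * b * D ^ (a - 2)) ^ q⁻¹ with hK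
  set ρ : ℝ := ((2:ℝ) ^ (2 - a)) ^ q⁻¹ with hρ
  have hρ0 : 0 < ρ := Real.rpow_pos_of_pos (Real.rpow_pos_of_pos two_pos _) _
  have hρ1 : ρ < 1 := by
    rw [hρ]
    apply Real.rpow_lt_one (Real.rpow_pos_of_pos two_pos _).le
    · exact Real.rpow_lt_one_of_one_lt_of_neg one_lt_two (by linarith)
    · exact inv_pos.mpr hq
  have hK0 : 0 ≤ K := Real.rpow_nonneg (by positivity) _
  have hdist : ∀ n, dist (f (u n)) (f (u (n+1))) ≤ K * ρ ^ n := by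
    intro n
    have hker := huker n
    have hcn : (0:ℝ) ≤ 32 * 4 ^ n * b / (D * D) := by positivity
    have hreal : ‖f (u n) - f (u (n+1))‖ ^ q / |u n - u (n+1)| ^ a
        ≤ 32 * 4 ^ n * b / (D * D) :=
      (ENNReal.ofReal_le_ofReal_iff hcn).mp hker
    -- |u n - u (n+1)| ≤ D * 2⁻¹ ^ n
    have hun : u n ∈ A n := (hugood n).1
    have hun1 : u (n+1) ∈ A n := hcnest n (hugood (n+1)).1
    have habs : |u n - u (n+1)| ≤ D * (2:ℝ)⁻¹ ^ n := by
      have := Real.dist_le_of_mem_Icc hun hun1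
      rw [Real.dist_eq] at this
      linarith [hlen_pos n]
    -- key real estimate
    have hKρ : (32 * 4 ^ n * b / (D * D) * (D * (2:ℝ)⁻¹ ^ n) ^ a) ^ q⁻¹ = K * ρ ^ n := by
      have e1 : (D * (2:ℝ)⁻¹ ^ n) ^ a = D ^ a * ((2:ℝ)⁻¹ ^ n) ^ a :=
        Real.mul_rpow hD0.le (by positivity)
      have e2 : ((2:ℝ)⁻¹ ^ n : ℝ) ^ a = (((2:ℝ)⁻¹) ^ a) ^ n :=
        pow_rpow_comm' (by norm_num) n a
      have e3 : 32 * 4 ^ n * b / (D * D) * (D ^ a * (((2:ℝ)⁻¹) ^ a) ^ n)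
          = (32 * b * D ^ (a - 2)) * ((2:ℝ) ^ (2 - a)) ^ n := by
        have eD : D ^ a = D ^ (a - 2) * (D * D) := by
          rw [show a = (a - 2) + 2 by ring, Real.rpow_add hD0, Real.rpow_two,
            sq]
          ring_nf
        have e4 : (4:ℝ) ^ n * (((2:ℝ)⁻¹) ^ a) ^ n = ((2:ℝ) ^ (2 - a)) ^ n := by
          rw [← mul_pow]
          congr 1
          rw [Real.inv_rpow two_pos.le, ← Real.rpow_neg two_pos.le,
            show (4:ℝ) = (2:ℝ) ^ (2:ℝ) by
              rw [Real.rpow_two]; norm_num,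
            ← Real.rpow_add two_pos]
          ring_nf
        calc 32 * 4 ^ n * b / (D * D) * (D ^ a * (((2:ℝ)⁻¹) ^ a) ^ n)
            = 32 * b * (D ^ a / (D * D)) * (4 ^ n * (((2:ℝ)⁻¹) ^ a) ^ n) := by ring
          _ = 32 * b * D ^ (a - 2) * ((2:ℝ) ^ (2 - a)) ^ n := by
              rw [eD, e4]
              field_simp
      rw [e1, e2, e3, Real.mul_rpow (by positivity) (by positivity),
        ← pow_rpow_comm' (Real.rpow_pos_of_pos two_pos _).le n q⁻¹]
    rw [dist_eq_norm]
    rcases eq_or_ne (u n) (u (n+1)) with heq | hne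
    · rw [heq]; simp
      positivity
    · have habs0 : 0 < |u n - u (n+1)| := abs_pos.mpr (sub_ne_zero.mpr hne)
      have hpow0 : 0 < |u n - u (n+1)| ^ a := Real.rpow_pos_of_pos habs0 a
      have h5 : ‖f (u n) - f (u (n+1))‖ ^ q ≤ 32 * 4 ^ n * b / (D * D)
          * (D * (2:ℝ)⁻¹ ^ n) ^ a := by
        have h6 := (div_le_iff₀ hpow0).mp hreal
        refine le_trans h6 ?_
        apply mul_le_mul_of_nonneg_left _ hcn
        exact Real.rpow_le_rpow habs0.le habs ha0
      calc ‖f (u n) - f (u (n+1))‖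
          = (‖f (u n) - f (u (n+1))‖ ^ q) ^ q⁻¹ := by
            rw [Real.rpow_rpow_inv (norm_nonneg _) hq.ne']
        _ ≤ (32 * 4 ^ n * b / (D * D) * (D * (2:ℝ)⁻¹ ^ n) ^ a) ^ q⁻¹ :=
            Real.rpow_le_rpow (by positivity) h5 (inv_pos.mpr hq).le
        _ = K * ρ ^ n := hKρ
  -- convergence of u to e
  have hue : Tendsto u atTop (𝓝 e) := by
    rw [tendsto_iff_dist_tendsto_zero]
    have hble : ∀ n, dist (u n) e ≤ D * (2:ℝ)⁻¹ ^ n := by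
      intro n
      simpa using Real.dist_le_of_mem_Icc (hugood n).1 (he n)
    refine squeeze_zero (fun n => dist_nonneg) hble ?_
    have : Tendsto (fun n : ℕ => D * (2:ℝ)⁻¹ ^ n) atTop (𝓝 (D * 0)) :=
      (tendsto_pow_atTop_nhds_zero_of_lt_one (by norm_num) (by norm_num)).const_mul D
    simpa using this
  have hsum : Summable (fun n => K * ρ ^ n) :=
    (summable_geometric_of_lt_one hρ0.le hρ1).mul_left K
  have hfe : Tendsto (fun n => f (u n)) atTop (𝓝 (f e)) := (hf.tendsto e).comp hue
  have hfin := dist_le_tsum_of_dist_le_of_tendsto₀ (f := fun n => f (u n))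
    (fun n => K * ρ ^ n) hdist hsum hfe
  have htsum : ∑' n : ℕ, K * ρ ^ n = K * (1 - ρ)⁻¹ := by
    rw [tsum_mul_left, tsum_geometric_of_lt_one hρ0.le hρ1]
  have hfin' : dist (f x₀) (f e) ≤ K * (1 - ρ)⁻¹ := by
    simpa [hu0, htsum] using hfin
  rw [← dist_eq_norm]
  exact hfin'

end Chain

set_option maxHeartbeats 2000000 in
/-- **Garsia–Rodemich–Rumsey inequality in Hölder form.** For every `γ > 0`, `p ≥ 1` and
`l ∈ ℕ` there is a constant `C = C_{γ,p,l} > 0` such that for every `T > 0` and every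
continuous `f : [0,T] → ℝ^l`,
`|f(t) - f(s)|/(t-s)^γ ≤ C (∫₀ᵀ∫₀ᵀ |f(u)-f(v)|^{2p}/|u-v|^{2γp+2} du dv)^{1/(2p)}`,
the inequality holding trivially (in `ℝ≥0∞`) when the right-hand side is infinite. -/
theorem garsia_rodemich_rumsey_holder (γ p : ℝ) (hγ : 0 < γ) (hp : 1 ≤ p) (l : ℕ) :
    ∃ C : ℝ, 0 < C ∧
      ∀ (T : ℝ), 0 < T →
      ∀ f : ℝ → EuclideanSpace ℝ (Fin l), ContinuousOn f (Icc 0 T) →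
      ∀ s t : ℝ, 0 ≤ s → s < t → t ≤ T →
        ENNReal.ofReal (‖f t - f s‖ / (t - s) ^ γ) ≤
          ENNReal.ofReal C *
            (∫⁻ u in Icc (0 : ℝ) T, ∫⁻ v in Icc (0 : ℝ) T,
                ENNReal.ofReal (‖f u - f v‖ ^ (2 * p) / |u - v| ^ (2 * γ * p + 2)))
              ^ (1 / (2 * p)) := by
  set q : ℝ := 2 * p with hqdef
  set a : ℝ := 2 * γ * p + 2 with hadef
  have hp0 : (0:ℝ) < p := lt_of_lt_of_le one_pos hp
  have hq : 0 < q := by positivity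
  have ha : 2 < a := by nlinarith
  have hr1 : (2:ℝ) ^ (-γ) < 1 :=
    Real.rpow_lt_one_of_one_lt_of_neg one_lt_two (by linarith)
  have hr0 : (0:ℝ) < (2:ℝ) ^ (-γ) := Real.rpow_pos_of_pos two_pos _
  set C : ℝ := 2 * 32 ^ q⁻¹ * (1 - (2:ℝ) ^ (-γ))⁻¹ with hCdef
  have hC : 0 < C := by
    have h32 : (0:ℝ) < 32 ^ q⁻¹ := Real.rpow_pos_of_pos (by norm_num) _
    have : (0:ℝ) < 1 - (2:ℝ) ^ (-γ) := by linarith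
    positivity
  refine ⟨C, hC, ?_⟩
  intro T hT f hfc s t hs hst htT
  -- the continuous extension
  set g : ℝ → EuclideanSpace ℝ (Fin l) := fun x => f (min T (max 0 x)) with hgdef
  have hclamp : ∀ x, min T (max 0 x) ∈ Icc (0:ℝ) T :=
    fun x => ⟨le_min hT.le (le_max_left 0 x), min_le_left _ _⟩
  have hg : Continuous g :=
    hfc.comp_continuous (continuous_const.min (continuous_const.max continuous_id)) hclamp
  have hEq : ∀ x ∈ Icc (0:ℝ) T, g x = f x := by
    intro x hx
    rw [hgdef]
    simp only
    rw [max_eq_right hx.1, min_eq_right hx.2]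
  have hsT : s ∈ Icc (0:ℝ) T := ⟨hs, le_trans hst.le htT⟩
  have htTm : t ∈ Icc (0:ℝ) T := ⟨le_trans hs hst.le, htT⟩
  set D : ℝ := t - s with hDdef
  have hD0 : 0 < D := sub_pos.mpr hst
  -- identify the integral with the grrKer integral for g
  set Bg : ℝ≥0∞ := ∫⁻ u in Icc (0:ℝ) T, ∫⁻ v in Icc (0:ℝ) T, grrKer g q a u v with hBgdef
  have hBfull_eq : (∫⁻ u in Icc (0:ℝ) T, ∫⁻ v in Icc (0:ℝ) T,
      ENNReal.ofReal (‖f u - f v‖ ^ (2 * p) / |u - v| ^ (2 * γ * p + 2))) = Bg := by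
    rw [hBgdef]
    refine setLIntegral_congr_fun measurableSet_Icc (fun u hu => ?_)
    refine setLIntegral_congr_fun measurableSet_Icc (fun v hv => ?_)
    rw [grrKer, hEq u hu, hEq v hv]
  rw [hBfull_eq]
  -- trivial if the integral is infinite
  rcases eq_or_ne Bg ⊤ with htop | hfin
  · rw [htop, ENNReal.top_rpow_of_pos (by positivity), ENNReal.mul_top
      (by simpa [ENNReal.ofReal_eq_zero, not_le] using hC)]
    exact le_top
  -- main case
  set b : ℝ := Bg.toReal with hbdef
  have hb0 : 0 ≤ b := ENNReal.toReal_nonneg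
  have hBgb : Bg ≤ ENNReal.ofReal b := (ENNReal.ofReal_toReal hfin).symm.le
  have hsub : Icc s t ⊆ Icc (0:ℝ) T := Icc_subset_Icc hs htT
  have hBst : ∫⁻ u in Icc s t, ∫⁻ v in Icc s t, grrKer g q a u v ≤ ENNReal.ofReal b := by
    refine le_trans ?_ hBgb
    rw [hBgdef]
    refine le_trans (lintegral_mono fun u => lintegral_mono_set hsub) ?_
    exact lintegral_mono_set hsub
  -- choose the midpoint x₀
  have hIm : Measurable fun x => ∫⁻ v in Icc s t, grrKer g q a x v :=
    measurable_grrI hg hq.le (by linarith) s t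
  have hvolst : volume (Icc s t) = ENNReal.ofReal D := by
    rw [Real.volume_Icc]
  obtain ⟨x₀, hx₀A, hx₀I, -⟩ := grr_select measurableSet_Icc
    (by rw [hvolst]; exact (ENNReal.ofReal_pos.mpr hD0).ne')
    (by rw [hvolst]; exact ENNReal.ofReal_ne_top)
    hIm hIm ENNReal.ofReal_ne_top ENNReal.ofReal_ne_top hBst hBst
  have hx₀I' : ∫⁻ v in Icc s t, grrKer g q a x₀ v ≤ ENNReal.ofReal (4 * b / D) := by
    refine le_trans hx₀I (le_of_eq ?_)
    rw [hvolst, ← ENNReal.ofReal_ofNat 4, ← ENNReal.ofReal_mul (by norm_num),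
      ← ENNReal.ofReal_div_of_pos hD0]
  -- chain to s
  have hchain_s := grr_chain (e := s) (c := fun _ => s) hg hq ha hst hb0 hBst rfl
    (fun n => ⟨le_rfl, by
      nlinarith [pow_le_one₀ (by norm_num : (0:ℝ) ≤ (2:ℝ)⁻¹) (by norm_num : ((2:ℝ)⁻¹) ≤ 1) (n := n),
        pow_pos (by norm_num : (0:ℝ) < (2:ℝ)⁻¹) n]⟩)
    (fun n => Icc_subset_Icc le_rfl (by
      have h1 : ((2:ℝ)⁻¹) ^ (n+1) ≤ ((2:ℝ)⁻¹) ^ n :=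
        pow_le_pow_of_le_one (by norm_num) (by norm_num) (Nat.le_succ n)
      nlinarith))
    (fun n => ⟨le_rfl, le_add_of_nonneg_right (by positivity)⟩)
    hx₀A hx₀I'
  -- chain to t
  have hchain_t := grr_chain (e := t) (c := fun n => t - D * (2:ℝ)⁻¹ ^ n) hg hq ha hst hb0 hBst
    (by simp [hDdef])
    (fun n => ⟨by
      nlinarith [pow_le_one₀ (by norm_num : (0:ℝ) ≤ (2:ℝ)⁻¹) (by norm_num : ((2:ℝ)⁻¹) ≤ 1) (n := n),
        pow_pos (by norm_num : (0:ℝ) < (2:ℝ)⁻¹) n], by ring_nf; nlinarith [pow_pos (by norm_num : (0:ℝ) < (2:ℝ)⁻¹) n]⟩)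
    (fun n => by
      have h1 : ((2:ℝ)⁻¹) ^ (n+1) ≤ ((2:ℝ)⁻¹) ^ n :=
        pow_le_pow_of_le_one (by norm_num) (by norm_num) (Nat.le_succ n)
      refine Icc_subset_Icc (by nlinarith) (by nlinarith))
    (fun n => ⟨by nlinarith [pow_pos (by norm_num : (0:ℝ) < (2:ℝ)⁻¹) n], by
      nlinarith [pow_pos (by norm_num : (0:ℝ) < (2:ℝ)⁻¹) n]⟩)
    hx₀A hx₀I'
  -- identify constants
  have hexpρ : (2 - a) * q⁻¹ = -γ := by
    rw [hadef, hqdef]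
    field_simp
    ring
  have hexpK : (a - 2) * q⁻¹ = γ := by
    rw [hadef, hqdef]
    field_simp
    ring
  have hρ : ((2:ℝ) ^ (2 - a)) ^ q⁻¹ = (2:ℝ) ^ (-γ) := by
    rw [← Real.rpow_mul two_pos.le, hexpρ]
  have hKc : (32 * b * D ^ (a - 2)) ^ q⁻¹ = 32 ^ q⁻¹ * b ^ q⁻¹ * D ^ γ := by
    rw [Real.mul_rpow (by positivity) (Real.rpow_nonneg hD0.le _),
      Real.mul_rpow (by norm_num) hb0, ← Real.rpow_mul hD0.le, hexpK]
  rw [hρ, hKc] at hchain_s hchain_t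
  -- combine the two chains
  have hnorm : ‖f t - f s‖ ≤ C * b ^ q⁻¹ * D ^ γ := by
    rw [← hEq t htTm, ← hEq s hsT]
    have htri := dist_triangle (g t) (g x₀) (g s)
    rw [dist_eq_norm, dist_eq_norm, dist_eq_norm, norm_sub_rev (g t) (g x₀)] at htri
    calc ‖g t - g s‖ ≤ ‖g x₀ - g t‖ + ‖g x₀ - g s‖ := htri
      _ ≤ 32 ^ q⁻¹ * b ^ q⁻¹ * D ^ γ * (1 - (2:ℝ) ^ (-γ))⁻¹
          + 32 ^ q⁻¹ * b ^ q⁻¹ * D ^ γ * (1 - (2:ℝ) ^ (-γ))⁻¹ := add_le_add hchain_t hchain_s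
      _ = C * b ^ q⁻¹ * D ^ γ := by rw [hCdef]; ring
  have hγD : 0 < D ^ γ := Real.rpow_pos_of_pos hD0 γ
  have hdiv : ‖f t - f s‖ / D ^ γ ≤ C * b ^ q⁻¹ := by
    rw [div_le_iff₀ hγD]
    calc ‖f t - f s‖ ≤ C * b ^ q⁻¹ * D ^ γ := hnorm
      _ = C * b ^ q⁻¹ * D ^ γ := rfl
  refine le_trans (ENNReal.ofReal_le_ofReal hdiv) ?_
  rw [ENNReal.ofReal_mul hC.le]
  have hbq : ENNReal.ofReal (b ^ q⁻¹) = Bg ^ (1 / q) := by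
    rw [one_div, hbdef, ENNReal.toReal_rpow, ENNReal.ofReal_toReal
      (ENNReal.rpow_ne_top_of_nonneg (by positivity) hfin)]
  rw [hbq]

end
end
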